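/- arXiv:1407.8240 — 3 statements merged into one kernel-verified Lean document; each statement's English description precedes it below -/
import Mathlib

section
/- If (R, ·_λ·) is an r-dimensional left (respectively, right) Novikov conformal superalgebra, then R with the λ-bracket [a_λ b] = a_λ b − (−1)^{αβ}(b_{−λ−T} a), for homogeneous a ∈ R_α and b ∈ R_β, is an r-dimensional Lie conformal superalgebra. -/
open Finsupp MvPolynomial
open scoped TensorProduct

namespace CA

noncomputable section

variable (r : ℕ) (R : Type*) [AddCommGroup R] [Module ℂ R]
  [Module (MvPolynomial (Fin r) ℂ) R] [IsScalarTower ℂ (MvPolynomial (Fin r) ℂ) R]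

/-- Polynomials in `r` variables (the `λ`'s) with coefficients in `R`,
encoded via exponent multi-indices. -/
abbrev VP : Type _ := (Fin r →₀ ℕ) →₀ R

/-- Polynomials in two families of `r` variables (`λ`'s = `Sum.inl`, `μ`'s = `Sum.inr`)
with coefficients in `R`. -/
abbrev BP : Type _ := ((Fin r ⊕ Fin r) →₀ ℕ) →₀ R

/-- The action of `T i` on `R`, as a `ℂ`-linear endomorphism. -/
def tAct (i : Fin r) : R →ₗ[ℂ] R where
  toFun v := (X i : MvPolynomial (Fin r) ℂ) • v
  map_add' u v := smul_add _ u v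
  map_smul' c v := by
    simp only [RingHom.id_apply]
    rw [← algebraMap_smul (MvPolynomial (Fin r) ℂ) c v, ← mul_smul, mul_comm, mul_smul,
      algebraMap_smul]

/-- Multiplication by the variable `λ i` on `VP`. -/
def vLam (i : Fin r) : Module.End ℂ (VP r R) :=
  Finsupp.lmapDomain R ℂ (· + Finsupp.single i 1)

/-- The action of `T i` on the coefficients of an element of `VP`. -/
def vT (i : Fin r) : Module.End ℂ (VP r R) :=
  Finsupp.mapRange.linearMap (tAct r R i)

/-- The substitution `λ ↦ -λ - T` on `VP`. -/
def vNeg (F : VP r R) : VP r R :=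
  F.sum fun k v =>
    ((List.ofFn fun i : Fin r => (-(vLam r R i) - vT r R i) ^ (k i)).prod)
      (Finsupp.single 0 v)

/-- Multiplication by the monomial with exponent `e` on `BP`. -/
def bShift (e : (Fin r ⊕ Fin r) →₀ ℕ) : Module.End ℂ (BP r R) :=
  Finsupp.lmapDomain R ℂ (· + e)

/-- Multiplication by `λ i` on `BP`. -/
def bLam (i : Fin r) : Module.End ℂ (BP r R) := bShift r R (Finsupp.single (Sum.inl i) 1)

/-- Multiplication by `μ i` on `BP`. -/
def bMu (i : Fin r) : Module.End ℂ (BP r R) := bShift r R (Finsupp.single (Sum.inr i) 1)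

/-- The action of `T i` on the coefficients of an element of `BP`. -/
def bT (i : Fin r) : Module.End ℂ (BP r R) :=
  Finsupp.mapRange.linearMap (tAct r R i)

/-- Evaluation of an element of `VP` at a (commuting) family `s` of operators on `BP`:
`Σ_k λ^k v_k ↦ Σ_k s^k (v_k)`. -/
def ev (s : Fin r → Module.End ℂ (BP r R)) (F : VP r R) : BP r R :=
  F.sum fun k v => ((List.ofFn fun i : Fin r => (s i) ^ (k i)).prod) (Finsupp.single 0 v)

/-- Extension of a `λ`-product `p` to a polynomial first argument, evaluated at the
family of operators `s`:  `(Σ_e x^e v_e)_s b = Σ_e x^e · (p v_e b)(s)`. -/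
def evL (p : R → R → VP r R) (s : Fin r → Module.End ℂ (BP r R)) (F : BP r R) (b : R) :
    BP r R :=
  F.sum fun e v => bShift r R e (ev r R s (p v b))

/-- Extension of a `λ`-product `p` to a polynomial second argument, evaluated at the
family of operators `s`:  `a_s (Σ_e x^e w_e) = Σ_e x^e · (p a w_e)(s)`. -/
def evR (p : R → R → VP r R) (s : Fin r → Module.End ℂ (BP r R)) (a : R) (G : BP r R) :
    BP r R :=
  G.sum fun e w => bShift r R e (ev r R s (p a w))

/-- The family `λ`. -/
def FL : Fin r → Module.End ℂ (BP r R) := fun i => bLam r R i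
/-- The family `μ`. -/
def FM : Fin r → Module.End ℂ (BP r R) := fun i => bMu r R i
/-- The family `λ + μ`. -/
def FLM : Fin r → Module.End ℂ (BP r R) := fun i => bLam r R i + bMu r R i
/-- The family `-λ - T`. -/
def FNL : Fin r → Module.End ℂ (BP r R) := fun i => -(bLam r R i) - bT r R i
/-- The family `-μ - T`. -/
def FNM : Fin r → Module.End ℂ (BP r R) := fun i => -(bMu r R i) - bT r R i
/-- The family `-λ - μ - T`. -/
def FNLM : Fin r → Module.End ℂ (BP r R) := fun i => -(bLam r R i) - bMu r R i - bT r R i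

/-- The sign `(-1)^(αβ)` for parities `α β : ZMod 2`. -/
def sgn (α β : ZMod 2) : ℤ := (-1) ^ (α.val * β.val)

/-- `ℂ`-bilinearity of a `λ`-product. -/
def Bilin (p : R → R → VP r R) : Prop :=
  (∀ a b c : R, p (a + b) c = p a c + p b c) ∧
  (∀ a b c : R, p a (b + c) = p a b + p a c) ∧
  (∀ (z : ℂ) (a b : R), p (z • a) b = z • p a b) ∧
  (∀ (z : ℂ) (a b : R), p a (z • b) = z • p a b)

/-- A `λ`-product is parity-preserving w.r.t. a grading `G`. -/
def ParityPres (G : ZMod 2 → Submodule ℂ R) (p : R → R → VP r R) : Prop :=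
  ∀ (α β : ZMod 2) (a b : R), a ∈ G α → b ∈ G β → ∀ k, p a b k ∈ G (α + β)

/-- Conformal sesquilinearity: `(T_i a)_λ b = -λ_i (a_λ b)` and
`a_λ (T_i b) = (T_i + λ_i)(a_λ b)`. -/
def Sesq (p : R → R → VP r R) : Prop :=
  ∀ (i : Fin r) (a b : R),
    p ((X i : MvPolynomial (Fin r) ℂ) • a) b = (-(vLam r R i)) (p a b) ∧
    p a ((X i : MvPolynomial (Fin r) ℂ) • b) = (vT r R i + vLam r R i) (p a b)

/-- `G` is a `ℤ/2ℤ`-grading of the `ℂ[T]`-module `R`. -/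
def IsGraded (G : ZMod 2 → Submodule ℂ R) : Prop :=
  DirectSum.IsInternal G ∧
  ∀ (i : Fin r) (α : ZMod 2) (v : R), v ∈ G α →
    (X i : MvPolynomial (Fin r) ℂ) • v ∈ G α

/-- Conformal skew-symmetry `[a_λ b] = -(-1)^{αβ} [b_{-λ-T} a]`. -/
def Skew (G : ZMod 2 → Submodule ℂ R) (q : R → R → VP r R) : Prop :=
  ∀ (α β : ZMod 2) (a b : R), a ∈ G α → b ∈ G β →
    q a b = -(sgn α β • vNeg r R (q b a))

/-- Conformal Jacobi identity
`[a_λ [b_μ c]] = [[a_λ b]_{λ+μ} c] + (-1)^{αβ} [b_μ [a_λ c]]`. -/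
def Jacobi (G : ZMod 2 → Submodule ℂ R) (q : R → R → VP r R) : Prop :=
  ∀ (α β : ZMod 2) (a b c : R), a ∈ G α → b ∈ G β →
    evR r R q (FL r R) a (ev r R (FM r R) (q b c)) =
      evL r R q (FLM r R) (ev r R (FL r R) (q a b)) c +
      sgn α β • evR r R q (FM r R) b (ev r R (FL r R) (q a c))

/-- `q` is an `r`-dimensional Lie conformal superalgebra `λ`-bracket on `R` graded by `G`. -/
def IsLieConfSuper (G : ZMod 2 → Submodule ℂ R) (q : R → R → VP r R) : Prop :=
  Bilin r R q ∧ ParityPres r R G q ∧ Sesq r R q ∧ Skew r R G q ∧ Jacobi r R G q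

/-- Left Novikov conformal identity
`(a_λ b)_{λ+μ} c - a_λ (b_μ c) = (-1)^{αβ} ((b_μ a)_{λ+μ} c - b_μ (a_λ c))`. -/
def NovLeft1 (G : ZMod 2 → Submodule ℂ R) (p : R → R → VP r R) : Prop :=
  ∀ (α β : ZMod 2) (a b c : R), a ∈ G α → b ∈ G β →
    evL r R p (FLM r R) (ev r R (FL r R) (p a b)) c -
      evR r R p (FL r R) a (ev r R (FM r R) (p b c)) =
    sgn α β • (evL r R p (FLM r R) (ev r R (FM r R) (p b a)) c -
      evR r R p (FM r R) b (ev r R (FL r R) (p a c)))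

/-- Left Novikov conformal identity `(a_λ b)_{λ+μ} c = (-1)^{βγ} (a_λ c)_{-μ-T} b`. -/
def NovLeft2 (G : ZMod 2 → Submodule ℂ R) (p : R → R → VP r R) : Prop :=
  ∀ (β γ : ZMod 2) (a b c : R), b ∈ G β → c ∈ G γ →
    evL r R p (FLM r R) (ev r R (FL r R) (p a b)) c =
      sgn β γ • evL r R p (FNM r R) (ev r R (FL r R) (p a c)) b

/-- `p` is an `r`-dimensional (left) Novikov conformal superalgebra `λ`-product. -/
def IsNovLeft (G : ZMod 2 → Submodule ℂ R) (p : R → R → VP r R) : Prop :=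
  Bilin r R p ∧ ParityPres r R G p ∧ Sesq r R p ∧ NovLeft1 r R G p ∧ NovLeft2 r R G p

/-- Right Novikov conformal identity
`a_λ (b_μ c) - (a_λ b)_{λ+μ} c = (-1)^{βγ} (a_λ (c_{-μ-T} b) - (a_λ c)_{-μ-T} b)`. -/
def NovRight1 (G : ZMod 2 → Submodule ℂ R) (p : R → R → VP r R) : Prop :=
  ∀ (β γ : ZMod 2) (a b c : R), b ∈ G β → c ∈ G γ →
    evR r R p (FL r R) a (ev r R (FM r R) (p b c)) -
      evL r R p (FLM r R) (ev r R (FL r R) (p a b)) c =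
    sgn β γ • (evR r R p (FL r R) a (ev r R (FNM r R) (p c b)) -
      evL r R p (FNM r R) (ev r R (FL r R) (p a c)) b)

/-- Right Novikov conformal identity `a_λ (b_μ c) = (-1)^{αβ} b_μ (a_λ c)`. -/
def NovRight2 (G : ZMod 2 → Submodule ℂ R) (p : R → R → VP r R) : Prop :=
  ∀ (α β : ZMod 2) (a b c : R), a ∈ G α → b ∈ G β →
    evR r R p (FL r R) a (ev r R (FM r R) (p b c)) =
      sgn α β • evR r R p (FM r R) b (ev r R (FL r R) (p a c))

/-- `p` is an `r`-dimensional right Novikov conformal superalgebra `λ`-product. -/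
def IsNovRight (G : ZMod 2 → Submodule ℂ R) (p : R → R → VP r R) : Prop :=
  Bilin r R p ∧ ParityPres r R G p ∧ Sesq r R p ∧ NovRight1 r R G p ∧ NovRight2 r R G p

/-- The compatibility condition of a super Gel'fand-Dorfman conformal bialgebra:
`[(a_{-μ-T} b)_{-λ-T} c] + [a_{-μ-T} b]_{-λ-T} c - a_{-λ-μ-T} [b_{-λ-T} c]`
`- (-1)^{βγ} [(a_{-λ-T} c)_{-μ-T} b] - (-1)^{βγ} [a_{-λ-T} c]_{-μ-T} b = 0`. -/
def GDCompat (G : ZMod 2 → Submodule ℂ R) (p q : R → R → VP r R) : Prop :=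
  ∀ (β γ : ZMod 2) (a b c : R), b ∈ G β → c ∈ G γ →
    evL r R q (FNL r R) (ev r R (FNM r R) (p a b)) c +
    evL r R p (FNL r R) (ev r R (FNM r R) (q a b)) c -
    evR r R p (FNLM r R) a (ev r R (FNL r R) (q b c)) -
    sgn β γ • evL r R q (FNM r R) (ev r R (FNL r R) (p a c)) b -
    sgn β γ • evL r R p (FNM r R) (ev r R (FNL r R) (q a c)) b = 0

/-- `(R, p, q)` is an `r`-dimensional super Gel'fand-Dorfman conformal bialgebra. -/
def IsGDConf (G : ZMod 2 → Submodule ℂ R) (p q : R → R → VP r R) : Prop :=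
  IsNovLeft r R G p ∧ IsLieConfSuper r R G q ∧ GDCompat r R G p q

/-! Ungraded (purely even) versions. -/

def Skew' (q : R → R → VP r R) : Prop :=
  ∀ a b : R, q a b = -(vNeg r R (q b a))

def Jacobi' (q : R → R → VP r R) : Prop :=
  ∀ a b c : R,
    evR r R q (FL r R) a (ev r R (FM r R) (q b c)) =
      evL r R q (FLM r R) (ev r R (FL r R) (q a b)) c +
      evR r R q (FM r R) b (ev r R (FL r R) (q a c))

/-- `q` is an `r`-dimensional Lie conformal algebra `λ`-bracket on `R`. -/
def IsLieConf' (q : R → R → VP r R) : Prop :=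
  Bilin r R q ∧ Sesq r R q ∧ Skew' r R q ∧ Jacobi' r R q

def NovLeft1' (p : R → R → VP r R) : Prop :=
  ∀ a b c : R,
    evL r R p (FLM r R) (ev r R (FL r R) (p a b)) c -
      evR r R p (FL r R) a (ev r R (FM r R) (p b c)) =
    evL r R p (FLM r R) (ev r R (FM r R) (p b a)) c -
      evR r R p (FM r R) b (ev r R (FL r R) (p a c))

def NovLeft2' (p : R → R → VP r R) : Prop :=
  ∀ a b c : R,
    evL r R p (FLM r R) (ev r R (FL r R) (p a b)) c =
      evL r R p (FNM r R) (ev r R (FL r R) (p a c)) b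

/-- `p` is an `r`-dimensional (left) Novikov conformal algebra `λ`-product. -/
def IsNovLeft' (p : R → R → VP r R) : Prop :=
  Bilin r R p ∧ Sesq r R p ∧ NovLeft1' r R p ∧ NovLeft2' r R p

def GDCompat' (p q : R → R → VP r R) : Prop :=
  ∀ a b c : R,
    evL r R q (FNL r R) (ev r R (FNM r R) (p a b)) c +
    evL r R p (FNL r R) (ev r R (FNM r R) (q a b)) c -
    evR r R p (FNLM r R) a (ev r R (FNL r R) (q b c)) -
    evL r R q (FNM r R) (ev r R (FNL r R) (p a c)) b -
    evL r R p (FNM r R) (ev r R (FNL r R) (q a c)) b = 0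

/-- `(R, p, q)` is an `r`-dimensional Gel'fand-Dorfman conformal bialgebra. -/
def IsGDConf' (p q : R → R → VP r R) : Prop :=
  IsNovLeft' r R p ∧ IsLieConf' r R q ∧ GDCompat' r R p q

end

/-! Ordinary (non-conformal) structures on a complex vector space. -/

noncomputable section

variable (V : Type*) [AddCommGroup V] [Module ℂ V]

/-- `ℂ`-bilinearity of an ordinary product. -/
def BilinV (m : V → V → V) : Prop :=
  (∀ a b c : V, m (a + b) c = m a c + m b c) ∧
  (∀ a b c : V, m a (b + c) = m a b + m a c) ∧
  (∀ (z : ℂ) (a b : V), m (z • a) b = z • m a b) ∧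
  (∀ (z : ℂ) (a b : V), m a (z • b) = z • m a b)

def ParityPresV (G : ZMod 2 → Submodule ℂ V) (m : V → V → V) : Prop :=
  ∀ (α β : ZMod 2) (a b : V), a ∈ G α → b ∈ G β → m a b ∈ G (α + β)

/-- `br` is a Lie superalgebra bracket on `V` graded by `G`. -/
def IsLieSuper (G : ZMod 2 → Submodule ℂ V) (br : V → V → V) : Prop :=
  BilinV V br ∧ ParityPresV V G br ∧
  (∀ (α β : ZMod 2) (a b : V), a ∈ G α → b ∈ G β → br a b = -(sgn α β • br b a)) ∧
  (∀ (α β : ZMod 2) (a b : V), a ∈ G α → b ∈ G β → ∀ c : V,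
    br a (br b c) = br (br a b) c + sgn α β • br b (br a c))

/-- `m` is a (left) Novikov superalgebra product on `V` graded by `G`. -/
def IsNovSuper (G : ZMod 2 → Submodule ℂ V) (m : V → V → V) : Prop :=
  BilinV V m ∧ ParityPresV V G m ∧
  (∀ (β γ : ZMod 2) (b c : V), b ∈ G β → c ∈ G γ → ∀ a : V,
    m (m a b) c = sgn β γ • m (m a c) b) ∧
  (∀ (α β : ZMod 2) (a b : V), a ∈ G α → b ∈ G β → ∀ c : V,
    m (m a b) c - m a (m b c) = sgn α β • (m (m b a) c - m b (m a c)))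

/-- `m` is a supercommutative associative product on `V` graded by `G`. -/
def IsCommAssocSuper (G : ZMod 2 → Submodule ℂ V) (m : V → V → V) : Prop :=
  BilinV V m ∧ ParityPresV V G m ∧
  (∀ (α β : ZMod 2) (a b : V), a ∈ G α → b ∈ G β → m a b = sgn α β • m b a) ∧
  (∀ a b c : V, m (m a b) c = m a (m b c))

/-- `(V, m, dot)` is a Novikov-Poisson superalgebra. -/
def IsNovPoissonSuper (G : ZMod 2 → Submodule ℂ V) (m dot : V → V → V) : Prop :=
  IsNovSuper V G m ∧ IsCommAssocSuper V G dot ∧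
  (∀ (α β : ZMod 2) (a b : V), a ∈ G α → b ∈ G β → ∀ c : V,
    dot (m a b) c - m a (dot b c) = sgn α β • (dot (m b a) c - m b (dot a c))) ∧
  (∀ a b c : V, m (dot a b) c = dot a (m b c))

/-- `(V, br, m)` is a super Gel'fand-Dorfman bialgebra. -/
def IsGDSuper (G : ZMod 2 → Submodule ℂ V) (br m : V → V → V) : Prop :=
  IsLieSuper V G br ∧ IsNovSuper V G m ∧
  (∀ (β γ : ZMod 2) (b c : V), b ∈ G β → c ∈ G γ → ∀ a : V,
    br (m a b) c + m (br a b) c - m a (br b c) -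
      sgn β γ • br (m a c) b - sgn β γ • m (br a c) b = 0)

/-- `br` is a Lie algebra bracket on `V`. -/
def IsLieAlg (br : V → V → V) : Prop :=
  BilinV V br ∧ (∀ a b : V, br a b = -br b a) ∧
  (∀ a b c : V, br a (br b c) = br (br a b) c + br b (br a c))

/-- `m` is a (left) Novikov algebra product on `V`. -/
def IsNovAlg (m : V → V → V) : Prop :=
  BilinV V m ∧ (∀ a b c : V, m (m a b) c = m (m a c) b) ∧
  (∀ a b c : V, m (m a b) c - m a (m b c) = m (m b a) c - m b (m a c))

/-- `m` is a commutative associative product on `V`. -/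
def IsCommAssoc (m : V → V → V) : Prop :=
  BilinV V m ∧ (∀ a b : V, m a b = m b a) ∧ (∀ a b c : V, m (m a b) c = m a (m b c))

/-- `(V, m, dot)` is a Novikov-Poisson algebra. -/
def IsNovPoisson (m dot : V → V → V) : Prop :=
  IsNovAlg V m ∧ IsCommAssoc V dot ∧
  (∀ a b c : V, dot (m a b) c - m a (dot b c) = dot (m b a) c - m b (dot a c)) ∧
  (∀ a b c : V, m (dot a b) c = dot a (m b c))

/-- `(V, br, dot)` is a Lie-Poisson algebra. -/
def IsLiePoisson (br dot : V → V → V) : Prop :=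
  IsLieAlg V br ∧ IsCommAssoc V dot ∧
  (∀ a b c : V, br a (dot b c) = dot (br a b) c + dot b (br a c))

/-- `(V, br, m)` is a Gel'fand-Dorfman bialgebra. -/
def IsGD (br m : V → V → V) : Prop :=
  IsLieAlg V br ∧ IsNovAlg V m ∧
  (∀ a b c : V,
    br (m a b) c + m (br a b) c - m a (br b c) - br (m a c) b - m (br a c) b = 0)

end

/-! Free `ℂ[T₁,…,T_r]`-modules on a graded vector space. -/

noncomputable section

variable (r : ℕ) (V : Type*) [AddCommGroup V] [Module ℂ V]

/-- The free `ℂ[T₁,…,T_r]`-module `ℂ[T₁,…,T_r] ⊗ V` on the vector space `V`. -/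
abbrev TR : Type _ := MvPolynomial (Fin r) ℂ ⊗[ℂ] V

/-- The embedding of `V` into `ℂ[T₁,…,T_r] ⊗ V`. -/
def ιT : V → TR r V := fun v => (1 : MvPolynomial (Fin r) ℂ) ⊗ₜ[ℂ] v

/-- The grading of `ℂ[T₁,…,T_r] ⊗ V` induced by a grading of `V` (the `T`'s are even). -/
def TG (G : ZMod 2 → Submodule ℂ V) : ZMod 2 → Submodule ℂ (TR r V) := fun α =>
  Submodule.span ℂ {x : TR r V |
    ∃ (f : MvPolynomial (Fin r) ℂ) (v : V), v ∈ G α ∧ x = f ⊗ₜ[ℂ] v}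

end



section ListProd

variable {M : Type*} [Monoid M]

lemma ofFn_prod_mul : ∀ {n : ℕ} (f g : Fin n → M),
    (∀ i j, Commute (f i) (g j)) →
    (List.ofFn fun i => f i * g i).prod = (List.ofFn f).prod * (List.ofFn g).prod := by
  intro n
  induction n with
  | zero => intro f g _; simp
  | succ n ih =>
    intro f g h
    rw [List.ofFn_succ, List.ofFn_succ, List.ofFn_succ, List.prod_cons, List.prod_cons,
      List.prod_cons, ih (fun i => f i.succ) (fun i => g i.succ) (fun i j => h i.succ j.succ)]
    have hc : Commute (g 0) (List.ofFn fun i : Fin n => f i.succ).prod := by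
      apply Commute.list_prod_right
      intro x hx
      rw [List.mem_ofFn] at hx
      obtain ⟨i, rfl⟩ := hx
      exact (h i.succ 0).symm
    rw [mul_assoc (f 0), mul_assoc (f 0)]
    congr 1
    rw [← mul_assoc, hc.eq, mul_assoc]

lemma commute_ofFn_prod {a : M} {n : ℕ} (f : Fin n → M)
    (h : ∀ i, Commute a (f i)) : Commute a (List.ofFn f).prod := by
  apply Commute.list_prod_right
  intro x hx
  rw [List.mem_ofFn] at hx
  obtain ⟨i, rfl⟩ := hx
  exact h i

lemma ofFn_prod_ite : ∀ {n : ℕ} (i : Fin n) (g : Fin n → M),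
    (List.ofFn fun j => if i = j then g j else 1).prod = g i := by
  intro n
  induction n with
  | zero => exact fun i => i.elim0
  | succ n ih =>
    intro i g
    rw [List.ofFn_succ, List.prod_cons]
    rcases Fin.eq_zero_or_eq_succ i with rfl | ⟨j, rfl⟩
    · have h1 : (fun m : Fin n => if (0 : Fin (n+1)) = m.succ then g m.succ else 1)
          = fun _ => 1 := by
        funext m
        rw [if_neg (Fin.succ_ne_zero m).symm]
      rw [h1, List.ofFn_const, List.prod_replicate, one_pow, if_pos rfl, mul_one]
    · rw [if_neg (Fin.succ_ne_zero j)]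
      have h1 : (fun m : Fin n => if j.succ = m.succ then g m.succ else 1)
          = fun m => if j = m then g m.succ else 1 := by
        funext m
        simp [Fin.succ_inj]
      rw [h1, one_mul, ih j (fun m => g m.succ)]

/-- `piPow A k = ∏ i, A i ^ k i` as an ordered list product. -/
def piPow {n : ℕ} (A : Fin n → M) (k : Fin n →₀ ℕ) : M :=
  (List.ofFn fun i => A i ^ k i).prod

lemma piPow_zero {n : ℕ} (A : Fin n → M) : piPow A 0 = 1 := by
  unfold piPow
  simp

lemma piPow_add {n : ℕ} (A : Fin n → M) (h : ∀ i j, Commute (A i) (A j)) (k m : Fin n →₀ ℕ) :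
    piPow A (k + m) = piPow A k * piPow A m := by
  unfold piPow
  have h2 : (fun i => A i ^ (k + m) i) = fun i => A i ^ k i * A i ^ m i := by
    funext i
    rw [Finsupp.add_apply, pow_add]
  rw [h2]
  exact ofFn_prod_mul _ _ fun i j => (h i j).pow_pow _ _

lemma piPow_single {n : ℕ} (A : Fin n → M) (i : Fin n) (m : ℕ) :
    piPow A (Finsupp.single i m) = A i ^ m := by
  unfold piPow
  have h2 : (fun j => A j ^ (Finsupp.single i m) j) = fun j => if i = j then A j ^ m else 1 := by
    funext j
    rw [Finsupp.single_apply, apply_ite (A j ^ ·), pow_zero]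
  rw [h2, ofFn_prod_ite]

lemma piPow_add_single {n : ℕ} (A : Fin n → M) (h : ∀ i j, Commute (A i) (A j))
    (k : Fin n →₀ ℕ) (i : Fin n) :
    piPow A (k + Finsupp.single i 1) = A i * piPow A k := by
  rw [add_comm, piPow_add A h, piPow_single, pow_one]

lemma commute_piPow {n : ℕ} {a : M} (A : Fin n → M) (h : ∀ i, Commute a (A i))
    (k : Fin n →₀ ℕ) : Commute a (piPow A k) :=
  commute_ofFn_prod _ fun i => (h i).pow_right _

end ListProd

section Push

variable {V W : Type*} [AddCommMonoid V] [Module ℂ V] [AddCommMonoid W] [Module ℂ W]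

private lemma push_pow (F : V → W) (A : Module.End ℂ V) (A' : Module.End ℂ W)
    (h : ∀ x, F (A x) = A' (F x)) : ∀ (m : ℕ) (x), F ((A ^ m) x) = (A' ^ m) (F x) := by
  intro m
  induction m with
  | zero => intro x; simp
  | succ m ih =>
    intro x
    rw [pow_succ, Module.End.mul_apply, ih (A x), h, pow_succ, Module.End.mul_apply]

private lemma push_ofFn (F : V → W) : ∀ {n : ℕ} (A : Fin n → Module.End ℂ V)
    (A' : Fin n → Module.End ℂ W), (∀ i x, F ((A i) x) = (A' i) (F x)) →
    ∀ (k : Fin n → ℕ) (x : V),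
      F ((List.ofFn fun i => A i ^ k i).prod x) = (List.ofFn fun i => A' i ^ k i).prod (F x) := by
  intro n
  induction n with
  | zero => intro A A' h k x; simp
  | succ n ih =>
    intro A A' h k x
    rw [List.ofFn_succ, List.ofFn_succ, List.prod_cons, List.prod_cons,
      Module.End.mul_apply, Module.End.mul_apply,
      push_pow F (A 0) (A' 0) (h 0),
      ih (fun i => A i.succ) (fun i => A' i.succ) (fun i x => h i.succ x) (fun i => k i.succ)]

/-- Intertwining a map through a `piPow` of endomorphisms. -/
lemma piPow_push {n : ℕ} (F : V → W) (A : Fin n → Module.End ℂ V)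
    (A' : Fin n → Module.End ℂ W) (h : ∀ i x, F ((A i) x) = (A' i) (F x))
    (k : Fin n →₀ ℕ) (x : V) : F (piPow A k x) = piPow A' k (F x) :=
  push_ofFn F A A' h (fun i => k i) x

end Push

noncomputable section AuxOps

variable (r : ℕ) (R : Type*) [AddCommGroup R] [Module ℂ R]
  [Module (MvPolynomial (Fin r) ℂ) R] [IsScalarTower ℂ (MvPolynomial (Fin r) ℂ) R]

lemma tAct_apply (i : Fin r) (v : R) : tAct r R i v = (X i : MvPolynomial (Fin r) ℂ) • v := rfl

private lemma comm_lmapDomain {α : Type*} (σ τ : α → α) (h : ∀ x, σ (τ x) = τ (σ x)) :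
    Commute (Finsupp.lmapDomain R ℂ σ) (Finsupp.lmapDomain R ℂ τ) := by
  apply LinearMap.ext
  intro F
  show Finsupp.mapDomain σ (Finsupp.mapDomain τ F) = Finsupp.mapDomain τ (Finsupp.mapDomain σ F)
  rw [← Finsupp.mapDomain_comp, ← Finsupp.mapDomain_comp]
  congr 1
  funext x
  exact h x

private lemma comm_lmapDomain_mapRange {α : Type*} (σ : α → α) (f : R →ₗ[ℂ] R) :
    Commute (Finsupp.lmapDomain R ℂ σ) (Finsupp.mapRange.linearMap (α := α) f) := by
  apply LinearMap.ext
  intro F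
  show Finsupp.mapDomain σ (Finsupp.mapRange.linearMap f F)
      = Finsupp.mapRange.linearMap f (Finsupp.mapDomain σ F)
  rw [Finsupp.mapRange.linearMap_apply, Finsupp.mapRange.linearMap_apply]
  exact Finsupp.mapDomain_mapRange _ _ _ _ (map_add f)

lemma comm_shift_shift (d e : (Fin r ⊕ Fin r) →₀ ℕ) :
    Commute (bShift r R d) (bShift r R e) :=
  comm_lmapDomain R _ _ fun x => by simp [add_assoc, add_comm e d]

lemma comm_T_shift (i : Fin r) (e : (Fin r ⊕ Fin r) →₀ ℕ) :
    Commute (bT r R i) (bShift r R e) :=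
  (comm_lmapDomain_mapRange R _ _).symm

lemma comm_T_T (i j : Fin r) : Commute (bT r R i) (bT r R j) := by
  apply LinearMap.ext
  intro F
  ext e
  show (Finsupp.mapRange.linearMap (tAct r R i) (Finsupp.mapRange.linearMap (tAct r R j) F)) e
      = (Finsupp.mapRange.linearMap (tAct r R j) (Finsupp.mapRange.linearMap (tAct r R i) F)) e
  simp only [Finsupp.mapRange.linearMap_apply, Finsupp.mapRange_apply, tAct_apply]
  rw [smul_smul, smul_smul, mul_comm]

/-- `A` commutes with all the standard generators. -/
def Nice (A : Module.End ℂ (BP r R)) : Prop :=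
  (∀ e, Commute (bShift r R e) A) ∧ (∀ j, Commute (bT r R j) A)

lemma nice_bShift (e) : Nice r R (bShift r R e) :=
  ⟨fun d => comm_shift_shift r R d e, fun j => comm_T_shift r R j e⟩

lemma nice_bT (i : Fin r) : Nice r R (bT r R i) :=
  ⟨fun d => (comm_T_shift r R i d).symm, fun j => comm_T_T r R j i⟩

lemma Nice.neg {A} (h : Nice r R A) : Nice r R (-A) :=
  ⟨fun e => (h.1 e).neg_right, fun j => (h.2 j).neg_right⟩

lemma Nice.add {A B} (hA : Nice r R A) (hB : Nice r R B) : Nice r R (A + B) :=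
  ⟨fun e => (hA.1 e).add_right (hB.1 e), fun j => (hA.2 j).add_right (hB.2 j)⟩

lemma Nice.sub {A B} (hA : Nice r R A) (hB : Nice r R B) : Nice r R (A - B) :=
  ⟨fun e => (hA.1 e).sub_right (hB.1 e), fun j => (hA.2 j).sub_right (hB.2 j)⟩

lemma nice_FL (i : Fin r) : Nice r R (FL r R i) := nice_bShift r R _
lemma nice_FM (i : Fin r) : Nice r R (FM r R i) := nice_bShift r R _
lemma nice_FLM (i : Fin r) : Nice r R (FLM r R i) :=
  (nice_bShift r R _).add r R (nice_bShift r R _)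
lemma nice_FNL (i : Fin r) : Nice r R (FNL r R i) :=
  ((nice_bShift r R _).neg r R).sub r R (nice_bT r R i)
lemma nice_FNM (i : Fin r) : Nice r R (FNM r R i) :=
  ((nice_bShift r R _).neg r R).sub r R (nice_bT r R i)
lemma nice_FNLM (i : Fin r) : Nice r R (FNLM r R i) :=
  (((nice_bShift r R _).neg r R).sub r R (nice_bShift r R _)).sub r R (nice_bT r R i)

lemma Nice.commL {A} (h : Nice r R A) : ∀ i, Commute (FL r R i) A := fun i => h.1 _
lemma Nice.commM {A} (h : Nice r R A) : ∀ i, Commute (FM r R i) A := fun i => h.1 _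
lemma Nice.commLM {A} (h : Nice r R A) : ∀ i, Commute (FLM r R i) A := fun i =>
  (h.1 _).add_left (h.1 _)
lemma Nice.commNL {A} (h : Nice r R A) : ∀ i, Commute (FNL r R i) A := fun i =>
  ((h.1 _).neg_left).sub_left (h.2 i)
lemma Nice.commNM {A} (h : Nice r R A) : ∀ i, Commute (FNM r R i) A := fun i =>
  ((h.1 _).neg_left).sub_left (h.2 i)
lemma Nice.commNLM {A} (h : Nice r R A) : ∀ i, Commute (FNLM r R i) A := fun i =>
  (((h.1 _).neg_left).sub_left (h.1 _)).sub_left (h.2 i)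

lemma Nice.commT {A} (h : Nice r R A) : ∀ i, Commute (bT r R i) A := h.2

end AuxOps

noncomputable section AuxEv

variable (r : ℕ) (R : Type*) [AddCommGroup R] [Module ℂ R]
  [Module (MvPolynomial (Fin r) ℂ) R] [IsScalarTower ℂ (MvPolynomial (Fin r) ℂ) R]

set_option linter.unusedSectionVars false

lemma comm_apply {V : Type*} [AddCommMonoid V] [Module ℂ V] {A B : Module.End ℂ V}
    (h : Commute A B) (x : V) : A (B x) = B (A x) := by
  rw [← Module.End.mul_apply, h.eq, Module.End.mul_apply]

/-! ### `ev` -/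

lemma ev_def (s : Fin r → Module.End ℂ (BP r R)) (F : VP r R) :
    ev r R s F = F.sum fun k v => piPow s k (Finsupp.single 0 v) := rfl

lemma ev_add (s : Fin r → Module.End ℂ (BP r R)) (F G : VP r R) :
    ev r R s (F + G) = ev r R s F + ev r R s G := by
  rw [ev_def, ev_def, ev_def]
  apply Finsupp.sum_add_index'
  · intro k
    rw [Finsupp.single_zero, map_zero]
  · intro k v w
    rw [Finsupp.single_add, map_add]

/-- `ev` bundled as an additive monoid hom. -/
def evH (s : Fin r → Module.End ℂ (BP r R)) : VP r R →+ BP r R :=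
  AddMonoidHom.mk' (ev r R s) (ev_add r R s)

lemma evH_apply (s : Fin r → Module.End ℂ (BP r R)) (F : VP r R) :
    evH r R s F = ev r R s F := rfl

lemma ev_single (s : Fin r → Module.End ℂ (BP r R)) (k : Fin r →₀ ℕ) (v : R) :
    ev r R s (Finsupp.single k v) = piPow s k (Finsupp.single 0 v) := by
  rw [ev_def]
  apply Finsupp.sum_single_index
  rw [Finsupp.single_zero, map_zero]

lemma ev_single0 (s : Fin r → Module.End ℂ (BP r R)) (v : R) :
    ev r R s (Finsupp.single 0 v) = Finsupp.single 0 v := by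
  rw [ev_single, piPow_zero, Module.End.one_apply]

/-- Push an additive map through `ev`, given pointwise intertwining relations. -/
lemma hom_ev (T : BP r R →+ BP r R) (g g' : Fin r → Module.End ℂ (BP r R))
    (hop : ∀ i x, T (g i x) = g' i (T x)) (H : VP r R) :
    T (ev r R g H) = H.sum fun k u => piPow g' k (T (Finsupp.single 0 u)) := by
  rw [ev_def, map_finsuppSum]
  exact Finsupp.sum_congr fun k _ => piPow_push T g g' hop k _

lemma vLam_single (i : Fin r) (m : Fin r →₀ ℕ) (v : R) :
    vLam r R i (Finsupp.single m v) = Finsupp.single (m + Finsupp.single i 1) v := by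
  show Finsupp.mapDomain _ (Finsupp.single m v) = _
  rw [Finsupp.mapDomain_single]

lemma comm_vLam_vLam (i j : Fin r) : Commute (vLam r R i) (vLam r R j) :=
  comm_lmapDomain R _ _ fun x => by
    simp [add_assoc, add_comm (Finsupp.single j 1) (Finsupp.single i 1)]

lemma comm_vT_vLam (i j : Fin r) : Commute (vT r R i) (vLam r R j) :=
  (comm_lmapDomain_mapRange R _ _).symm

lemma comm_vT_vT (i j : Fin r) : Commute (vT r R i) (vT r R j) := by
  apply LinearMap.ext
  intro F
  ext e
  show (Finsupp.mapRange.linearMap (tAct r R i) (Finsupp.mapRange.linearMap (tAct r R j) F)) e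
      = (Finsupp.mapRange.linearMap (tAct r R j) (Finsupp.mapRange.linearMap (tAct r R i) F)) e
  simp only [Finsupp.mapRange.linearMap_apply, Finsupp.mapRange_apply, tAct_apply]
  rw [smul_smul, smul_smul, mul_comm]

lemma comm_NV_NV (i j : Fin r) :
    Commute (-(vLam r R i) - vT r R i) (-(vLam r R j) - vT r R j) :=
  (((comm_vLam_vLam r R i j).neg_left.neg_right.sub_right
      (comm_vT_vLam r R j i).symm.neg_left).sub_left
    (((comm_vT_vLam r R i j).neg_right).sub_right (comm_vT_vT r R i j)))

lemma comm_vT_NV (i j : Fin r) : Commute (vT r R i) (-(vLam r R j) - vT r R j) :=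
  (comm_vT_vLam r R i j).neg_right.sub_right (comm_vT_vT r R i j)

lemma comm_vLam_NV (i j : Fin r) : Commute (vLam r R i) (-(vLam r R j) - vT r R j) :=
  (comm_vLam_vLam r R i j).neg_right.sub_right (comm_vT_vLam r R j i).symm

/-! ### `vNeg` -/

lemma vNeg_def (F : VP r R) :
    vNeg r R F = F.sum fun k v =>
      piPow (fun i => -(vLam r R i) - vT r R i) k (Finsupp.single 0 v) := rfl

lemma vNeg_add (F G : VP r R) : vNeg r R (F + G) = vNeg r R F + vNeg r R G := by
  rw [vNeg_def, vNeg_def, vNeg_def]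
  apply Finsupp.sum_add_index'
  · intro k
    rw [Finsupp.single_zero, map_zero]
  · intro k v w
    rw [Finsupp.single_add, map_add]

/-- `vNeg` bundled as an additive monoid hom. -/
def vNegH : VP r R →+ VP r R := AddMonoidHom.mk' (vNeg r R) (vNeg_add r R)

lemma vNegH_apply (F : VP r R) : vNegH r R F = vNeg r R F := rfl

lemma vNeg_single (k : Fin r →₀ ℕ) (v : R) :
    vNeg r R (Finsupp.single k v)
      = piPow (fun i => -(vLam r R i) - vT r R i) k (Finsupp.single 0 v) := by
  rw [vNeg_def]
  apply Finsupp.sum_single_index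
  rw [Finsupp.single_zero, map_zero]

lemma vNeg_single0 (v : R) : vNeg r R (Finsupp.single 0 v) = Finsupp.single 0 v := by
  rw [vNeg_single, piPow_zero, Module.End.one_apply]

lemma vNeg_vLam (i : Fin r) (F : VP r R) :
    vNeg r R (vLam r R i F) = (-(vLam r R i) - vT r R i) (vNeg r R F) := by
  show vNeg r R (Finsupp.mapDomain _ F) = _
  rw [vNeg_def, Finsupp.sum_mapDomain_index (fun k => by rw [Finsupp.single_zero, map_zero])
    (fun k v w => by rw [Finsupp.single_add, map_add]), vNeg_def, map_finsuppSum]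
  apply Finsupp.sum_congr
  intro k _
  rw [piPow_add_single _ (comm_NV_NV r R), Module.End.mul_apply]

lemma vT_single (i : Fin r) (m : Fin r →₀ ℕ) (v : R) :
    vT r R i (Finsupp.single m v) = Finsupp.single m (tAct r R i v) := by
  show Finsupp.mapRange.linearMap (tAct r R i) (Finsupp.single m v) = _
  rw [Finsupp.mapRange.linearMap_apply, Finsupp.mapRange_single]

lemma bT_single (i : Fin r) (e : (Fin r ⊕ Fin r) →₀ ℕ) (v : R) :
    bT r R i (Finsupp.single e v) = Finsupp.single e (tAct r R i v) := by
  show Finsupp.mapRange.linearMap (tAct r R i) (Finsupp.single e v) = _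
  rw [Finsupp.mapRange.linearMap_apply, Finsupp.mapRange_single]

lemma vNeg_vT (i : Fin r) (F : VP r R) :
    vNeg r R (vT r R i F) = vT r R i (vNeg r R F) := by
  show vNeg r R (Finsupp.mapRange.linearMap (tAct r R i) F) = _
  rw [Finsupp.mapRange.linearMap_apply, vNeg_def,
    Finsupp.sum_mapRange_index (fun k => by rw [Finsupp.single_zero, map_zero]),
    vNeg_def, map_finsuppSum]
  apply Finsupp.sum_congr
  intro k _
  rw [← vT_single]
  exact (comm_apply (commute_piPow _ (fun j => comm_vT_NV r R i j) k) _).symm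

lemma vNeg_NV (i : Fin r) (F : VP r R) :
    vNeg r R ((-(vLam r R i) - vT r R i) F) = vLam r R i (vNeg r R F) := by
  have h1 : vNeg r R ((-(vLam r R i) - vT r R i) F)
      = -(vNeg r R (vLam r R i F)) - vNeg r R (vT r R i F) := by
    rw [LinearMap.sub_apply, LinearMap.neg_apply, show vNeg r R = ⇑(vNegH r R) from rfl,
      map_sub, map_neg]
  rw [h1, vNeg_vLam, vNeg_vT, LinearMap.sub_apply, LinearMap.neg_apply]
  abel

private lemma vLam_pow_single (i : Fin r) (n : ℕ) (m : Fin r →₀ ℕ) (v : R) :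
    (vLam r R i ^ n) (Finsupp.single m v)
      = Finsupp.single (m + Finsupp.single i n) v := by
  induction n generalizing m with
  | zero => simp
  | succ n ih =>
    rw [pow_succ, Module.End.mul_apply, vLam_single, ih, add_assoc, ← Finsupp.single_add,
      add_comm 1 n]

lemma piPow_vLam_single (k : Fin r →₀ ℕ) (m : Fin r →₀ ℕ) (v : R) :
    piPow (vLam r R) k (Finsupp.single m v) = Finsupp.single (m + k) v := by
  induction k using Finsupp.induction generalizing m with
  | zero => rw [piPow_zero, Module.End.one_apply, add_zero]
  | single_add i n f hfi hn ih =>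
    rw [add_comm (Finsupp.single i n) f, piPow_add _ (comm_vLam_vLam r R),
      Module.End.mul_apply, piPow_single, vLam_pow_single, ih, add_assoc,
      add_comm f (Finsupp.single i n), ← add_assoc, add_assoc, add_comm (Finsupp.single i n) f]

lemma vNeg_vNeg (F : VP r R) : vNeg r R (vNeg r R F) = F := by
  have h1 : ∀ (k : Fin r →₀ ℕ) (v : R),
      vNegH r R (piPow (fun i => -(vLam r R i) - vT r R i) k (Finsupp.single 0 v))
        = Finsupp.single k v := by
    intro k v
    rw [piPow_push (vNegH r R) _ (vLam r R) (fun i x => vNeg_NV r R i x) k]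
    rw [vNegH_apply, vNeg_single0, piPow_vLam_single, zero_add]
  calc vNeg r R (vNeg r R F)
      = vNegH r R (F.sum fun k v =>
          piPow (fun i => -(vLam r R i) - vT r R i) k (Finsupp.single 0 v)) := by
        rw [vNegH_apply, vNeg_def r R F]
    _ = F.sum fun k v => vNegH r R
          (piPow (fun i => -(vLam r R i) - vT r R i) k (Finsupp.single 0 v)) :=
        map_finsuppSum _ _ _
    _ = F.sum fun k v => Finsupp.single k v := Finsupp.sum_congr fun k _ => h1 k _
    _ = F := Finsupp.sum_single F

/-- `ev` of `vNeg`. -/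
lemma ev_vLam (s : Fin r → Module.End ℂ (BP r R)) (hs : ∀ i j, Commute (s i) (s j))
    (i : Fin r) (F : VP r R) : ev r R s (vLam r R i F) = s i (ev r R s F) := by
  show ev r R s (Finsupp.mapDomain _ F) = _
  rw [ev_def, Finsupp.sum_mapDomain_index (fun k => by rw [Finsupp.single_zero, map_zero])
    (fun k v w => by rw [Finsupp.single_add, map_add]), ev_def, map_finsuppSum]
  apply Finsupp.sum_congr
  intro k _
  rw [piPow_add_single _ hs, Module.End.mul_apply]

lemma ev_vT (s : Fin r → Module.End ℂ (BP r R)) (hs : ∀ i j, Commute (bT r R i) (s j))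
    (i : Fin r) (F : VP r R) : ev r R s (vT r R i F) = bT r R i (ev r R s F) := by
  show ev r R s (Finsupp.mapRange.linearMap (tAct r R i) F) = _
  rw [Finsupp.mapRange.linearMap_apply, ev_def,
    Finsupp.sum_mapRange_index (fun k => by rw [Finsupp.single_zero, map_zero]),
    ev_def, map_finsuppSum]
  apply Finsupp.sum_congr
  intro k _
  rw [← bT_single]
  exact (comm_apply (commute_piPow _ (fun j => hs i j) k) _).symm

end AuxEv

noncomputable section AuxEvLR

variable (r : ℕ) (R : Type*) [AddCommGroup R] [Module ℂ R]
  [Module (MvPolynomial (Fin r) ℂ) R] [IsScalarTower ℂ (MvPolynomial (Fin r) ℂ) R]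

set_option linter.unusedSectionVars false
set_option linter.unusedVariables false

/-- `ev` of `vNeg` is `ev` at the family `-s - T`. -/
lemma ev_vNeg (s : Fin r → Module.End ℂ (BP r R)) (hs : ∀ i j, Commute (s i) (s j))
    (hsT : ∀ i j, Commute (bT r R i) (s j)) (F : VP r R) :
    ev r R s (vNeg r R F) = ev r R (fun i => -(s i) - bT r R i) F := by
  have hop : ∀ (i : Fin r) (x : VP r R),
      evH r R s ((-(vLam r R i) - vT r R i) x) = (-(s i) - bT r R i) (evH r R s x) := by
    intro i x
    rw [LinearMap.sub_apply, LinearMap.neg_apply, map_sub, map_neg,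
      LinearMap.sub_apply, LinearMap.neg_apply]
    rw [evH_apply, evH_apply, evH_apply, ev_vLam r R s hs, ev_vT r R s hsT]
  calc ev r R s (vNeg r R F)
      = evH r R s (F.sum fun k v =>
          piPow (fun i => -(vLam r R i) - vT r R i) k (Finsupp.single 0 v)) := by
        rw [evH_apply, vNeg_def]
    _ = F.sum fun k v => piPow (fun i => -(s i) - bT r R i) k
          (evH r R s (Finsupp.single 0 v)) := by
        rw [map_finsuppSum]
        exact Finsupp.sum_congr fun k _ => piPow_push (evH r R s) _ _ hop k _
    _ = F.sum fun k v => piPow (fun i => -(s i) - bT r R i) k (Finsupp.single 0 v) :=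
        Finsupp.sum_congr fun k _ => by rw [evH_apply, ev_single0]
    _ = ev r R (fun i => -(s i) - bT r R i) F := (ev_def r R _ F).symm

variable (p : R → R → VP r R)

lemma pzero_left (hp1 : ∀ a b c : R, p (a + b) c = p a c + p b c) (c : R) : p 0 c = 0 := by
  have h := hp1 0 0 c
  rw [add_zero] at h
  exact (left_eq_add.mp h)

lemma pzero_right (hp2 : ∀ a b c : R, p a (b + c) = p a b + p a c) (a : R) : p a 0 = 0 := by
  have h := hp2 a 0 0
  rw [add_zero] at h
  exact (left_eq_add.mp h)

/-! ### `evL` and `evR` -/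

lemma evL_def (s : Fin r → Module.End ℂ (BP r R)) (F : BP r R) (b : R) :
    evL r R p s F b = F.sum fun e v => bShift r R e (ev r R s (p v b)) := rfl

lemma evR_def (s : Fin r → Module.End ℂ (BP r R)) (a : R) (G : BP r R) :
    evR r R p s a G = G.sum fun e w => bShift r R e (ev r R s (p a w)) := rfl

lemma ev_zero (s : Fin r → Module.End ℂ (BP r R)) : ev r R s 0 = 0 := by
  rw [← evH_apply, map_zero]

lemma vNeg_zero : vNeg r R 0 = 0 := by
  rw [← vNegH_apply, map_zero]

lemma evL_add (hbil : Bilin r R p) (s : Fin r → Module.End ℂ (BP r R)) (F G : BP r R) (z : R) :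
    evL r R p s (F + G) z = evL r R p s F z + evL r R p s G z := by
  rw [evL_def, evL_def, evL_def]
  apply Finsupp.sum_add_index'
  · intro e
    rw [pzero_left r R p hbil.1, ev_zero, map_zero]
  · intro e v w
    rw [hbil.1, ev_add, map_add]

lemma evR_add (hbil : Bilin r R p) (s : Fin r → Module.End ℂ (BP r R)) (a : R) (F G : BP r R) :
    evR r R p s a (F + G) = evR r R p s a F + evR r R p s a G := by
  rw [evR_def, evR_def, evR_def]
  apply Finsupp.sum_add_index'
  · intro e
    rw [pzero_right r R p hbil.2.1, ev_zero, map_zero]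
  · intro e v w
    rw [hbil.2.1, ev_add, map_add]

/-- `evL` in the `BP` argument, bundled. -/
def evLH (hbil : Bilin r R p) (s : Fin r → Module.End ℂ (BP r R)) (z : R) : BP r R →+ BP r R :=
  AddMonoidHom.mk' (fun F => evL r R p s F z) (fun F G => evL_add r R p hbil s F G z)

lemma evLH_apply (hbil : Bilin r R p) (s) (z : R) (F : BP r R) :
    evLH r R p hbil s z F = evL r R p s F z := rfl

/-- `evR` in the `BP` argument, bundled. -/
def evRH (hbil : Bilin r R p) (s : Fin r → Module.End ℂ (BP r R)) (a : R) : BP r R →+ BP r R :=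
  AddMonoidHom.mk' (fun G => evR r R p s a G) (evR_add r R p hbil s a)

lemma evRH_apply (hbil : Bilin r R p) (s) (a : R) (G : BP r R) :
    evRH r R p hbil s a G = evR r R p s a G := rfl

end AuxEvLR

noncomputable section AuxCan

variable (r : ℕ) (R : Type*) [AddCommGroup R] [Module ℂ R]
  [Module (MvPolynomial (Fin r) ℂ) R] [IsScalarTower ℂ (MvPolynomial (Fin r) ℂ) R]
  (p : R → R → VP r R)

set_option linter.unusedSectionVars false
set_option linter.unusedVariables false

lemma bShift_zero : bShift r R 0 = LinearMap.id := by
  apply LinearMap.ext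
  intro F
  show Finsupp.mapDomain _ F = F
  have h : (fun x : (Fin r ⊕ Fin r) →₀ ℕ => x + 0) = id := by
    funext x
    exact add_zero x
  rw [h, Finsupp.mapDomain_id]

lemma bShift_mul (d e : (Fin r ⊕ Fin r) →₀ ℕ) :
    bShift r R d * bShift r R e = bShift r R (e + d) := by
  apply LinearMap.ext
  intro F
  show Finsupp.mapDomain _ (Finsupp.mapDomain _ F) = Finsupp.mapDomain _ F
  rw [← Finsupp.mapDomain_comp]
  congr 1
  funext x
  show x + e + d = x + (e + d)
  rw [add_assoc]

lemma evL_single0 (hbil : Bilin r R p) (s : Fin r → Module.End ℂ (BP r R)) (u z : R) :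
    evL r R p s (Finsupp.single 0 u) z = ev r R s (p u z) := by
  rw [evL_def]
  rw [Finsupp.sum_single_index (by rw [pzero_left r R p hbil.1, ev_zero, map_zero])]
  rw [bShift_zero, LinearMap.id_apply]

lemma evR_single0 (hbil : Bilin r R p) (s : Fin r → Module.End ℂ (BP r R)) (x u : R) :
    evR r R p s x (Finsupp.single 0 u) = ev r R s (p x u) := by
  rw [evR_def]
  rw [Finsupp.sum_single_index (by rw [pzero_right r R p hbil.2.1, ev_zero, map_zero])]
  rw [bShift_zero, LinearMap.id_apply]

lemma evL_op_shift (hbil : Bilin r R p) (s : Fin r → Module.End ℂ (BP r R))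
    (d : (Fin r ⊕ Fin r) →₀ ℕ) (F : BP r R) (z : R) :
    evL r R p s (bShift r R d F) z = bShift r R d (evL r R p s F z) := by
  show evL r R p s (Finsupp.mapDomain _ F) z = _
  rw [evL_def, Finsupp.sum_mapDomain_index
    (fun e => by rw [pzero_left r R p hbil.1, ev_zero, map_zero])
    (fun e v w => by rw [hbil.1, ev_add, map_add]), evL_def, map_finsuppSum]
  apply Finsupp.sum_congr
  intro e _
  rw [← Module.End.mul_apply, bShift_mul]

lemma evR_op_shift (hbil : Bilin r R p) (s : Fin r → Module.End ℂ (BP r R))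
    (x : R) (d : (Fin r ⊕ Fin r) →₀ ℕ) (F : BP r R) :
    evR r R p s x (bShift r R d F) = bShift r R d (evR r R p s x F) := by
  show evR r R p s x (Finsupp.mapDomain _ F) = _
  rw [evR_def, Finsupp.sum_mapDomain_index
    (fun e => by rw [pzero_right r R p hbil.2.1, ev_zero, map_zero])
    (fun e v w => by rw [hbil.2.1, ev_add, map_add]), evR_def, map_finsuppSum]
  apply Finsupp.sum_congr
  intro e _
  rw [← Module.End.mul_apply, bShift_mul]

lemma ev_neg (s : Fin r → Module.End ℂ (BP r R)) (F : VP r R) :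
    ev r R s (-F) = -(ev r R s F) := by
  rw [← evH_apply, ← evH_apply, map_neg]

lemma ev_sub (s : Fin r → Module.End ℂ (BP r R)) (F G : VP r R) :
    ev r R s (F - G) = ev r R s F - ev r R s G := by
  rw [← evH_apply, ← evH_apply, ← evH_apply, map_sub]

lemma ev_zsmul (s : Fin r → Module.End ℂ (BP r R)) (n : ℤ) (F : VP r R) :
    ev r R s (n • F) = n • ev r R s F := by
  rw [← evH_apply, ← evH_apply, map_zsmul]

lemma vNeg_neg (F : VP r R) : vNeg r R (-F) = -(vNeg r R F) := by
  rw [← vNegH_apply, ← vNegH_apply, map_neg]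

lemma vNeg_sub (F G : VP r R) : vNeg r R (F - G) = vNeg r R F - vNeg r R G := by
  rw [← vNegH_apply, ← vNegH_apply, ← vNegH_apply, map_sub]

lemma vNeg_zsmul (n : ℤ) (F : VP r R) : vNeg r R (n • F) = n • vNeg r R F := by
  rw [← vNegH_apply, ← vNegH_apply, map_zsmul]

lemma evL_op_bT (hbil : Bilin r R p) (hses : Sesq r R p) (s : Fin r → Module.End ℂ (BP r R))
    (hs : ∀ i j, Commute (s i) (s j)) (hsh : ∀ i e, Commute (s i) (bShift r R e))
    (i : Fin r) (F : BP r R) (z : R) :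
    evL r R p s (bT r R i F) z = -(s i (evL r R p s F z)) := by
  have h1 : ∀ (e : (Fin r ⊕ Fin r) →₀ ℕ) (v : R),
      bShift r R e (ev r R s (p (tAct r R i v) z))
        = (-(s i)) (bShift r R e (ev r R s (p v z))) := by
    intro e v
    rw [tAct_apply, (hses i v z).1, LinearMap.neg_apply, ev_neg, ev_vLam r R s hs,
      map_neg (bShift r R e), comm_apply (hsh i e).symm, LinearMap.neg_apply]
  calc evL r R p s (bT r R i F) z
      = F.sum fun e v => bShift r R e (ev r R s (p (tAct r R i v) z)) := by
        show evL r R p s (Finsupp.mapRange.linearMap (tAct r R i) F) z = _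
        rw [Finsupp.mapRange.linearMap_apply, evL_def,
          Finsupp.sum_mapRange_index (fun e => by
            rw [pzero_left r R p hbil.1, ev_zero, map_zero])]
    _ = F.sum fun e v => (-(s i)) (bShift r R e (ev r R s (p v z))) :=
        Finsupp.sum_congr fun e _ => h1 e _
    _ = (-(s i)) (F.sum fun e v => bShift r R e (ev r R s (p v z))) :=
        (map_finsuppSum _ _ _).symm
    _ = -(s i (evL r R p s F z)) := by rw [LinearMap.neg_apply, evL_def]

lemma evR_op_bT (hbil : Bilin r R p) (hses : Sesq r R p) (s : Fin r → Module.End ℂ (BP r R))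
    (hs : ∀ i j, Commute (s i) (s j)) (hsT : ∀ i j, Commute (bT r R i) (s j))
    (hsh : ∀ i e, Commute (s i) (bShift r R e))
    (x : R) (i : Fin r) (F : BP r R) :
    evR r R p s x (bT r R i F) = (bT r R i + s i) (evR r R p s x F) := by
  have h1 : ∀ (e : (Fin r ⊕ Fin r) →₀ ℕ) (v : R),
      bShift r R e (ev r R s (p x (tAct r R i v)))
        = (bT r R i + s i) (bShift r R e (ev r R s (p x v))) := by
    intro e v
    rw [tAct_apply, (hses i x v).2, LinearMap.add_apply, ev_add, ev_vT r R s hsT,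
      ev_vLam r R s hs, map_add (bShift r R e), LinearMap.add_apply,
      comm_apply (comm_T_shift r R i e).symm, comm_apply (hsh i e).symm]
  calc evR r R p s x (bT r R i F)
      = F.sum fun e v => bShift r R e (ev r R s (p x (tAct r R i v))) := by
        show evR r R p s x (Finsupp.mapRange.linearMap (tAct r R i) F) = _
        rw [Finsupp.mapRange.linearMap_apply, evR_def,
          Finsupp.sum_mapRange_index (fun e => by
            rw [pzero_right r R p hbil.2.1, ev_zero, map_zero])]
    _ = F.sum fun e v => (bT r R i + s i) (bShift r R e (ev r R s (p x v))) :=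
        Finsupp.sum_congr fun e _ => h1 e _
    _ = (bT r R i + s i) (F.sum fun e v => bShift r R e (ev r R s (p x v))) :=
        (map_finsuppSum _ _ _).symm
    _ = (bT r R i + s i) (evR r R p s x F) := by rw [evR_def]

end AuxCan

noncomputable section AuxCL

variable (r : ℕ) (R : Type*) [AddCommGroup R] [Module ℂ R]
  [Module (MvPolynomial (Fin r) ℂ) R] [IsScalarTower ℂ (MvPolynomial (Fin r) ℂ) R]
  (p : R → R → VP r R)

set_option linter.unusedSectionVars false
set_option linter.unusedVariables false

/-- Canonical form of a "left-type" composite `(x_g y)_Φ z`. -/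
def cL (g Φ : Fin r → Module.End ℂ (BP r R)) (x y z : R) : BP r R :=
  (p x y).sum fun k u => piPow g k (ev r R Φ (p u z))

/-- Canonical form of a "right-type" composite `x_Φ (y_g z)`. -/
def cR (g Φ : Fin r → Module.End ℂ (BP r R)) (x y z : R) : BP r R :=
  (p y z).sum fun k u => piPow g k (ev r R Φ (p x u))

lemma evL_ev (hbil : Bilin r R p) (Φ g gt : Fin r → Module.End ℂ (BP r R))
    (x y z : R)
    (hop : ∀ i X, evL r R p Φ (g i X) z = gt i (evL r R p Φ X z)) :
    evL r R p Φ (ev r R g (p x y)) z = cL r R p gt Φ x y z := by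
  have h1 := hom_ev r R (evLH r R p hbil Φ z) g gt (fun i X => hop i X) (p x y)
  rw [evLH_apply] at h1
  rw [h1]
  exact Finsupp.sum_congr fun k _ => by
    rw [evLH_apply, evL_single0 r R p hbil]

lemma evR_ev (hbil : Bilin r R p) (Φ g gt : Fin r → Module.End ℂ (BP r R))
    (x y z : R)
    (hop : ∀ i X, evR r R p Φ x (g i X) = gt i (evR r R p Φ x X)) :
    evR r R p Φ x (ev r R g (p y z)) = cR r R p gt Φ x y z := by
  have h1 := hom_ev r R (evRH r R p hbil Φ x) g gt (fun i X => hop i X) (p y z)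
  rw [evRH_apply] at h1
  rw [h1]
  exact Finsupp.sum_congr fun k _ => by
    rw [evRH_apply, evR_single0 r R p hbil]

/-! Pointwise intertwining relations for the standard families. -/

lemma hopL_FL (hbil : Bilin r R p) (Φ : Fin r → Module.End ℂ (BP r R)) (z : R) :
    ∀ (i : Fin r) (X : BP r R),
      evL r R p Φ (FL r R i X) z = FL r R i (evL r R p Φ X z) := fun i X =>
  evL_op_shift r R p hbil Φ _ X z

lemma hopL_FM (hbil : Bilin r R p) (Φ : Fin r → Module.End ℂ (BP r R)) (z : R) :
    ∀ (i : Fin r) (X : BP r R),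
      evL r R p Φ (FM r R i X) z = FM r R i (evL r R p Φ X z) := fun i X =>
  evL_op_shift r R p hbil Φ _ X z

lemma hopR_FL (hbil : Bilin r R p) (Φ : Fin r → Module.End ℂ (BP r R)) (x : R) :
    ∀ (i : Fin r) (X : BP r R),
      evR r R p Φ x (FL r R i X) = FL r R i (evR r R p Φ x X) := fun i X =>
  evR_op_shift r R p hbil Φ x _ X

lemma hopR_FM (hbil : Bilin r R p) (Φ : Fin r → Module.End ℂ (BP r R)) (x : R) :
    ∀ (i : Fin r) (X : BP r R),
      evR r R p Φ x (FM r R i X) = FM r R i (evR r R p Φ x X) := fun i X =>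
  evR_op_shift r R p hbil Φ x _ X

lemma hopL_FNL (hbil : Bilin r R p) (hses : Sesq r R p)
    (Φ : Fin r → Module.End ℂ (BP r R)) (hs : ∀ i j, Commute (Φ i) (Φ j))
    (hsh : ∀ i e, Commute (Φ i) (bShift r R e)) (z : R) :
    ∀ (i : Fin r) (X : BP r R),
      evL r R p Φ (FNL r R i X) z = (Φ i - FL r R i) (evL r R p Φ X z) := by
  intro i X
  have h1 : FNL r R i X = -(FL r R i X) - bT r R i X := by
    show (-(bLam r R i) - bT r R i) X = _
    rw [LinearMap.sub_apply, LinearMap.neg_apply]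
    rfl
  rw [h1, show evL r R p Φ (-(FL r R i X) - bT r R i X) z
      = -(evL r R p Φ (FL r R i X) z) - evL r R p Φ (bT r R i X) z by
    rw [← evLH_apply r R p hbil, ← evLH_apply r R p hbil, ← evLH_apply r R p hbil,
      map_sub, map_neg]]
  rw [hopL_FL r R p hbil Φ z, evL_op_bT r R p hbil hses Φ hs hsh, LinearMap.sub_apply]
  abel

lemma hopL_FNM (hbil : Bilin r R p) (hses : Sesq r R p)
    (Φ : Fin r → Module.End ℂ (BP r R)) (hs : ∀ i j, Commute (Φ i) (Φ j))
    (hsh : ∀ i e, Commute (Φ i) (bShift r R e)) (z : R) :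
    ∀ (i : Fin r) (X : BP r R),
      evL r R p Φ (FNM r R i X) z = (Φ i - FM r R i) (evL r R p Φ X z) := by
  intro i X
  have h1 : FNM r R i X = -(FM r R i X) - bT r R i X := by
    show (-(bMu r R i) - bT r R i) X = _
    rw [LinearMap.sub_apply, LinearMap.neg_apply]
    rfl
  rw [h1, show evL r R p Φ (-(FM r R i X) - bT r R i X) z
      = -(evL r R p Φ (FM r R i X) z) - evL r R p Φ (bT r R i X) z by
    rw [← evLH_apply r R p hbil, ← evLH_apply r R p hbil, ← evLH_apply r R p hbil,
      map_sub, map_neg]]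
  rw [hopL_FM r R p hbil Φ z, evL_op_bT r R p hbil hses Φ hs hsh, LinearMap.sub_apply]
  abel

lemma hopR_FNL (hbil : Bilin r R p) (hses : Sesq r R p)
    (Φ : Fin r → Module.End ℂ (BP r R)) (hs : ∀ i j, Commute (Φ i) (Φ j))
    (hsT : ∀ i j, Commute (bT r R i) (Φ j))
    (hsh : ∀ i e, Commute (Φ i) (bShift r R e)) (x : R) :
    ∀ (i : Fin r) (X : BP r R),
      evR r R p Φ x (FNL r R i X) = (FNL r R i - Φ i) (evR r R p Φ x X) := by
  intro i X
  have h1 : FNL r R i X = -(FL r R i X) - bT r R i X := by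
    show (-(bLam r R i) - bT r R i) X = _
    rw [LinearMap.sub_apply, LinearMap.neg_apply]
    rfl
  rw [h1, show evR r R p Φ x (-(FL r R i X) - bT r R i X)
      = -(evR r R p Φ x (FL r R i X)) - evR r R p Φ x (bT r R i X) by
    rw [← evRH_apply r R p hbil, ← evRH_apply r R p hbil, ← evRH_apply r R p hbil,
      map_sub, map_neg]]
  rw [hopR_FL r R p hbil Φ x, evR_op_bT r R p hbil hses Φ hs hsT hsh,
    LinearMap.sub_apply, LinearMap.add_apply,
    show FNL r R i (evR r R p Φ x X)
        = -(bLam r R i (evR r R p Φ x X)) - bT r R i (evR r R p Φ x X) by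
      rw [show FNL r R i = -(bLam r R i) - bT r R i from rfl, LinearMap.sub_apply,
        LinearMap.neg_apply],
    show FL r R i = bLam r R i from rfl]
  abel

lemma hopR_FNM (hbil : Bilin r R p) (hses : Sesq r R p)
    (Φ : Fin r → Module.End ℂ (BP r R)) (hs : ∀ i j, Commute (Φ i) (Φ j))
    (hsT : ∀ i j, Commute (bT r R i) (Φ j))
    (hsh : ∀ i e, Commute (Φ i) (bShift r R e)) (x : R) :
    ∀ (i : Fin r) (X : BP r R),
      evR r R p Φ x (FNM r R i X) = (FNM r R i - Φ i) (evR r R p Φ x X) := by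
  intro i X
  have h1 : FNM r R i X = -(FM r R i X) - bT r R i X := by
    show (-(bMu r R i) - bT r R i) X = _
    rw [LinearMap.sub_apply, LinearMap.neg_apply]
    rfl
  rw [h1, show evR r R p Φ x (-(FM r R i X) - bT r R i X)
      = -(evR r R p Φ x (FM r R i X)) - evR r R p Φ x (bT r R i X) by
    rw [← evRH_apply r R p hbil, ← evRH_apply r R p hbil, ← evRH_apply r R p hbil,
      map_sub, map_neg]]
  rw [hopR_FM r R p hbil Φ x, evR_op_bT r R p hbil hses Φ hs hsT hsh,
    LinearMap.sub_apply, LinearMap.add_apply,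
    show FNM r R i (evR r R p Φ x X)
        = -(bMu r R i (evR r R p Φ x X)) - bT r R i (evR r R p Φ x X) by
      rw [show FNM r R i = -(bMu r R i) - bT r R i from rfl, LinearMap.sub_apply,
        LinearMap.neg_apply],
    show FM r R i = bMu r R i from rfl]
  abel

/-! Family identities. -/

lemma famA : (fun i => FNM r R i - FL r R i) = FNLM r R := by
  funext i
  show (-(bMu r R i) - bT r R i) - bLam r R i = -(bLam r R i) - bMu r R i - bT r R i
  abel

lemma famB : (fun i => FNL r R i - FM r R i) = FNLM r R := by
  funext i
  show (-(bLam r R i) - bT r R i) - bMu r R i = -(bLam r R i) - bMu r R i - bT r R i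
  abel

lemma famC : (fun i => FLM r R i - FL r R i) = FM r R := by
  funext i
  show (bLam r R i + bMu r R i) - bLam r R i = bMu r R i
  abel

lemma famD : (fun i => FNL r R i - FNLM r R i) = FM r R := by
  funext i
  show (-(bLam r R i) - bT r R i) - (-(bLam r R i) - bMu r R i - bT r R i) = bMu r R i
  abel

lemma famNM : (fun i => -(FM r R i) - bT r R i) = FNM r R := rfl

lemma famNL : (fun i => -(FL r R i) - bT r R i) = FNL r R := rfl

lemma famNLM : (fun i => -(FLM r R i) - bT r R i) = FNLM r R := by
  funext i
  show -(bLam r R i + bMu r R i) - bT r R i = -(bLam r R i) - bMu r R i - bT r R i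
  abel

end AuxCL

/-- All coefficients lie in `G δ`. -/
def CW {S : Type*} [AddCommGroup S] [Module ℂ S] (G : ZMod 2 → Submodule ℂ S)
    {κ : Type*} (δ : ZMod 2) (F : κ →₀ S) : Prop := ∀ k, F k ∈ G δ

section CWGeneric

variable {S : Type*} [AddCommGroup S] [Module ℂ S] {G : ZMod 2 → Submodule ℂ S}

lemma CW_zero {κ : Type*} {δ : ZMod 2} : CW G δ (0 : κ →₀ S) := fun k => by
  rw [Finsupp.coe_zero, Pi.zero_apply]
  exact zero_mem _

lemma CW_add {κ : Type*} {δ : ZMod 2} {F F' : κ →₀ S} (h : CW G δ F) (h' : CW G δ F') :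
    CW G δ (F + F') := fun k => by
  rw [Finsupp.add_apply]
  exact add_mem (h k) (h' k)

lemma CW_neg {κ : Type*} {δ : ZMod 2} {F : κ →₀ S} (h : CW G δ F) : CW G δ (-F) := fun k => by
  rw [Finsupp.neg_apply]
  exact neg_mem (h k)

lemma CW_sub {κ : Type*} {δ : ZMod 2} {F F' : κ →₀ S} (h : CW G δ F) (h' : CW G δ F') :
    CW G δ (F - F') := fun k => by
  rw [Finsupp.sub_apply]
  exact sub_mem (h k) (h' k)

lemma CW_zsmul {κ : Type*} {δ : ZMod 2} {F : κ →₀ S} (n : ℤ) (h : CW G δ F) :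
    CW G δ (n • F) := fun k => by
  have h1 : (n • F) k = n • F k := rfl
  rw [h1]
  exact zsmul_mem (h k) n

lemma CW_single {κ : Type*} {δ : ZMod 2} {v : S} (e : κ) (hv : v ∈ G δ) :
    CW G δ (Finsupp.single e v) := fun k => by
  classical
  rw [Finsupp.single_apply]
  split
  · exact hv
  · exact zero_mem _

lemma CW_sum {κ ι M : Type*} [Zero M] {δ : ZMod 2} (F : ι →₀ M) (g : ι → M → (κ →₀ S))
    (hg : ∀ e ∈ F.support, CW G δ (g e (F e))) : CW G δ (F.sum g) := fun k => by
  classical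
  show (F.sum g) k ∈ G δ
  rw [Finsupp.sum_apply]
  exact Submodule.sum_mem _ fun e he => hg e he k

lemma CW_mapDomain {κ κ' : Type*} {δ : ZMod 2} (σ : κ → κ') {F : κ →₀ S} (h : CW G δ F) :
    CW G δ (Finsupp.mapDomain σ F) := by
  rw [Finsupp.mapDomain]
  exact CW_sum _ _ fun e _ => CW_single _ (h e)

lemma CW_pow {κ : Type*} {δ : ZMod 2} (A : Module.End ℂ (κ →₀ S))
    (hA : ∀ X, CW G δ X → CW G δ (A X)) (n : ℕ) :
    ∀ X, CW G δ X → CW G δ ((A ^ n) X) := by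
  induction n with
  | zero => intro X h; rwa [pow_zero, Module.End.one_apply]
  | succ n ih =>
    intro X h
    rw [pow_succ, Module.End.mul_apply]
    exact ih _ (hA X h)

private lemma CW_listProd {κ : Type*} {δ : ZMod 2} :
    ∀ (l : List (Module.End ℂ (κ →₀ S))), (∀ B ∈ l, ∀ X, CW G δ X → CW G δ (B X)) →
    ∀ X, CW G δ X → CW G δ (l.prod X) := by
  intro l
  induction l with
  | nil => intro _ X h; rwa [List.prod_nil, Module.End.one_apply]
  | cons a t ih =>
    intro hl X h
    rw [List.prod_cons, Module.End.mul_apply]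
    exact hl a List.mem_cons_self _ (ih (fun B hB => hl B (List.mem_cons_of_mem a hB)) X h)

lemma CW_piPow {κ : Type*} {δ : ZMod 2} {n : ℕ} (A : Fin n → Module.End ℂ (κ →₀ S))
    (hA : ∀ i X, CW G δ X → CW G δ (A i X)) (k : Fin n →₀ ℕ) (X : κ →₀ S)
    (h : CW G δ X) : CW G δ (piPow A k X) := by
  refine CW_listProd _ ?_ X h
  intro B hB
  rw [List.mem_ofFn] at hB
  obtain ⟨i, rfl⟩ := hB
  exact CW_pow _ (hA i) _

end CWGeneric

noncomputable section AuxCW3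

variable (r : ℕ) (R : Type*) [AddCommGroup R] [Module ℂ R]
  [Module (MvPolynomial (Fin r) ℂ) R] [IsScalarTower ℂ (MvPolynomial (Fin r) ℂ) R]
  {G : ZMod 2 → Submodule ℂ R}

set_option linter.unusedSectionVars false
set_option linter.unusedVariables false

variable (hGX : ∀ (i : Fin r) (α : ZMod 2) (v : R), v ∈ G α →
  (X i : MvPolynomial (Fin r) ℂ) • v ∈ G α)

include hGX in
lemma CW_mapRange_tAct {κ : Type*} {δ : ZMod 2} (i : Fin r) {F : κ →₀ R} (h : CW G δ F) :
    CW G δ (Finsupp.mapRange.linearMap (tAct r R i) F) := fun k => by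
  rw [Finsupp.mapRange.linearMap_apply, Finsupp.mapRange_apply, tAct_apply]
  exact hGX i δ _ (h k)

lemma CW_bShift {δ : ZMod 2} (e : (Fin r ⊕ Fin r) →₀ ℕ) {F : BP r R} (h : CW G δ F) :
    CW G δ (bShift r R e F) := CW_mapDomain _ h

include hGX in
lemma CW_bT {δ : ZMod 2} (i : Fin r) {F : BP r R} (h : CW G δ F) : CW G δ (bT r R i F) :=
  CW_mapRange_tAct r R hGX i h

include hGX in
lemma CW_fam {δ : ZMod 2} (s : Fin r → Module.End ℂ (BP r R))
    (hfam : s = FL r R ∨ s = FM r R ∨ s = FLM r R ∨ s = FNL r R ∨ s = FNM r R ∨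
      s = FNLM r R) (i : Fin r) {F : BP r R} (h : CW G δ F) : CW G δ (s i F) := by
  have hL : CW G δ (bLam r R i F) := CW_bShift r R _ h
  have hM : CW G δ (bMu r R i F) := CW_bShift r R _ h
  have hT : CW G δ (bT r R i F) := CW_bT r R hGX i h
  rcases hfam with rfl | rfl | rfl | rfl | rfl | rfl
  · exact hL
  · exact hM
  · show CW G δ ((bLam r R i + bMu r R i) F)
    rw [LinearMap.add_apply]
    exact CW_add hL hM
  · show CW G δ ((-(bLam r R i) - bT r R i) F)
    rw [LinearMap.sub_apply, LinearMap.neg_apply]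
    exact CW_sub (CW_neg hL) hT
  · show CW G δ ((-(bMu r R i) - bT r R i) F)
    rw [LinearMap.sub_apply, LinearMap.neg_apply]
    exact CW_sub (CW_neg hM) hT
  · show CW G δ ((-(bLam r R i) - bMu r R i - bT r R i) F)
    rw [LinearMap.sub_apply, LinearMap.sub_apply, LinearMap.neg_apply]
    exact CW_sub (CW_sub (CW_neg hL) hM) hT

include hGX in
lemma CW_ev {δ : ZMod 2} (s : Fin r → Module.End ℂ (BP r R))
    (hfam : s = FL r R ∨ s = FM r R ∨ s = FLM r R ∨ s = FNL r R ∨ s = FNM r R ∨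
      s = FNLM r R) {F : VP r R} (h : CW G δ F) : CW G δ (ev r R s F) := by
  rw [ev_def]
  apply CW_sum
  intro k _
  exact CW_piPow s (fun i X hX => CW_fam r R hGX s hfam i hX) k _ (CW_single _ (h k))

include hGX in
lemma CW_vNeg {δ : ZMod 2} {F : VP r R} (h : CW G δ F) : CW G δ (vNeg r R F) := by
  rw [vNeg_def]
  apply CW_sum
  intro k _
  apply CW_piPow _ (fun i X hX => ?_) k _ (CW_single _ (h k))
  show CW G δ ((-(vLam r R i) - vT r R i) X)
  rw [LinearMap.sub_apply, LinearMap.neg_apply]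
  exact CW_sub (CW_neg (CW_mapDomain _ hX)) (CW_mapRange_tAct r R hGX i hX)

end AuxCW3

noncomputable section AuxEv2

variable (r : ℕ) (R : Type*) [AddCommGroup R] [Module ℂ R]
  [Module (MvPolynomial (Fin r) ℂ) R] [IsScalarTower ℂ (MvPolynomial (Fin r) ℂ) R]

set_option linter.unusedSectionVars false
set_option linter.unusedVariables false

/-- The `λ`-part of a `BP` exponent. -/
def cmapL (e : (Fin r ⊕ Fin r) →₀ ℕ) : Fin r →₀ ℕ :=
  e.comapDomain Sum.inl Sum.inl_injective.injOn

/-- The `μ`-part of a `BP` exponent. -/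
def cmapR (e : (Fin r ⊕ Fin r) →₀ ℕ) : Fin r →₀ ℕ :=
  e.comapDomain Sum.inr Sum.inr_injective.injOn

lemma cmapL_apply (e : (Fin r ⊕ Fin r) →₀ ℕ) (i : Fin r) : cmapL r e i = e (Sum.inl i) := rfl

lemma cmapR_apply (e : (Fin r ⊕ Fin r) →₀ ℕ) (i : Fin r) : cmapR r e i = e (Sum.inr i) := rfl

lemma cmapL_zero : cmapL r (0 : (Fin r ⊕ Fin r) →₀ ℕ) = 0 := by
  ext i
  rw [cmapL_apply]
  rfl

lemma cmapR_zero : cmapR r (0 : (Fin r ⊕ Fin r) →₀ ℕ) = 0 := by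
  ext i
  rw [cmapR_apply]
  rfl

lemma cmapL_add_single_inl (e : (Fin r ⊕ Fin r) →₀ ℕ) (i : Fin r) :
    cmapL r (e + Finsupp.single (Sum.inl i) 1) = cmapL r e + Finsupp.single i 1 := by
  classical
  ext k
  rw [Finsupp.add_apply, cmapL_apply, Finsupp.add_apply, cmapL_apply,
    Finsupp.single_apply, Finsupp.single_apply]
  simp [Sum.inl.injEq]

lemma cmapR_add_single_inl (e : (Fin r ⊕ Fin r) →₀ ℕ) (i : Fin r) :
    cmapR r (e + Finsupp.single (Sum.inl i) 1) = cmapR r e := by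
  classical
  ext k
  rw [cmapR_apply, Finsupp.add_apply, cmapR_apply, Finsupp.single_apply]
  simp

lemma cmapL_add_single_inr (e : (Fin r ⊕ Fin r) →₀ ℕ) (i : Fin r) :
    cmapL r (e + Finsupp.single (Sum.inr i) 1) = cmapL r e := by
  classical
  ext k
  rw [cmapL_apply, Finsupp.add_apply, cmapL_apply, Finsupp.single_apply]
  simp

lemma cmapR_add_single_inr (e : (Fin r ⊕ Fin r) →₀ ℕ) (i : Fin r) :
    cmapR r (e + Finsupp.single (Sum.inr i) 1) = cmapR r e + Finsupp.single i 1 := by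
  classical
  ext k
  rw [Finsupp.add_apply, cmapR_apply, Finsupp.add_apply, cmapR_apply,
    Finsupp.single_apply, Finsupp.single_apply]
  simp [Sum.inr.injEq]

/-- Substitution of families of operators for the `λ`'s and `μ`'s. -/
def ev2 (f g : Fin r → Module.End ℂ (BP r R)) (F : BP r R) : BP r R :=
  F.sum fun e v => (piPow f (cmapL r e) * piPow g (cmapR r e)) (Finsupp.single 0 v)

lemma ev2_add (f g : Fin r → Module.End ℂ (BP r R)) (F G : BP r R) :
    ev2 r R f g (F + G) = ev2 r R f g F + ev2 r R f g G := by
  unfold ev2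
  apply Finsupp.sum_add_index'
  · intro e
    rw [Finsupp.single_zero, map_zero]
  · intro e v w
    rw [Finsupp.single_add, map_add]

/-- `ev2` bundled. -/
def ev2H (f g : Fin r → Module.End ℂ (BP r R)) : BP r R →+ BP r R :=
  AddMonoidHom.mk' (ev2 r R f g) (ev2_add r R f g)

lemma ev2H_apply (f g : Fin r → Module.End ℂ (BP r R)) (F : BP r R) :
    ev2H r R f g F = ev2 r R f g F := rfl

lemma ev2_single0 (f g : Fin r → Module.End ℂ (BP r R)) (v : R) :
    ev2 r R f g (Finsupp.single 0 v) = Finsupp.single 0 v := by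
  unfold ev2
  rw [Finsupp.sum_single_index (by rw [Finsupp.single_zero, map_zero])]
  rw [cmapL_zero, cmapR_zero, piPow_zero, piPow_zero, one_mul, Module.End.one_apply]

lemma ev2_bLam (f g : Fin r → Module.End ℂ (BP r R)) (hf : ∀ i j, Commute (f i) (f j))
    (i : Fin r) (F : BP r R) :
    ev2 r R f g (bLam r R i F) = f i (ev2 r R f g F) := by
  have h1 : ∀ (e : (Fin r ⊕ Fin r) →₀ ℕ) (v : R),
      (piPow f (cmapL r (e + Finsupp.single (Sum.inl i) 1))
        * piPow g (cmapR r (e + Finsupp.single (Sum.inl i) 1))) (Finsupp.single 0 v)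
      = f i ((piPow f (cmapL r e) * piPow g (cmapR r e)) (Finsupp.single 0 v)) := by
    intro e v
    rw [cmapL_add_single_inl, cmapR_add_single_inl, piPow_add_single f hf, mul_assoc,
      Module.End.mul_apply]
  calc ev2 r R f g (bLam r R i F)
      = F.sum fun e v => (piPow f (cmapL r (e + Finsupp.single (Sum.inl i) 1))
          * piPow g (cmapR r (e + Finsupp.single (Sum.inl i) 1))) (Finsupp.single 0 v) := by
        show ev2 r R f g (Finsupp.mapDomain _ F) = _
        unfold ev2
        rw [Finsupp.sum_mapDomain_index (fun e => by rw [Finsupp.single_zero, map_zero])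
          (fun e v w => by rw [Finsupp.single_add, map_add])]
    _ = F.sum fun e v => f i ((piPow f (cmapL r e) * piPow g (cmapR r e))
          (Finsupp.single 0 v)) := Finsupp.sum_congr fun e _ => h1 e _
    _ = f i (ev2 r R f g F) := by
        rw [← map_finsuppSum (f i)]
        rfl

lemma ev2_bMu (f g : Fin r → Module.End ℂ (BP r R)) (hg : ∀ i j, Commute (g i) (g j))
    (hgf : ∀ i j, Commute (g i) (f j)) (i : Fin r) (F : BP r R) :
    ev2 r R f g (bMu r R i F) = g i (ev2 r R f g F) := by
  have h1 : ∀ (e : (Fin r ⊕ Fin r) →₀ ℕ) (v : R),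
      (piPow f (cmapL r (e + Finsupp.single (Sum.inr i) 1))
        * piPow g (cmapR r (e + Finsupp.single (Sum.inr i) 1))) (Finsupp.single 0 v)
      = g i ((piPow f (cmapL r e) * piPow g (cmapR r e)) (Finsupp.single 0 v)) := by
    intro e v
    rw [cmapL_add_single_inr, cmapR_add_single_inr, piPow_add_single g hg, ← mul_assoc,
      ← (commute_piPow f (fun j => hgf i j) (cmapL r e)).eq, mul_assoc, Module.End.mul_apply]
  calc ev2 r R f g (bMu r R i F)
      = F.sum fun e v => (piPow f (cmapL r (e + Finsupp.single (Sum.inr i) 1))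
          * piPow g (cmapR r (e + Finsupp.single (Sum.inr i) 1))) (Finsupp.single 0 v) := by
        show ev2 r R f g (Finsupp.mapDomain _ F) = _
        unfold ev2
        rw [Finsupp.sum_mapDomain_index (fun e => by rw [Finsupp.single_zero, map_zero])
          (fun e v w => by rw [Finsupp.single_add, map_add])]
    _ = F.sum fun e v => g i ((piPow f (cmapL r e) * piPow g (cmapR r e))
          (Finsupp.single 0 v)) := Finsupp.sum_congr fun e _ => h1 e _
    _ = g i (ev2 r R f g F) := by
        rw [← map_finsuppSum (g i)]
        rfl

lemma ev2_bT (f g : Fin r → Module.End ℂ (BP r R))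
    (hfT : ∀ i j, Commute (bT r R i) (f j)) (hgT : ∀ i j, Commute (bT r R i) (g j))
    (i : Fin r) (F : BP r R) :
    ev2 r R f g (bT r R i F) = bT r R i (ev2 r R f g F) := by
  have h1 : ∀ (e : (Fin r ⊕ Fin r) →₀ ℕ) (v : R),
      (piPow f (cmapL r e) * piPow g (cmapR r e)) (Finsupp.single 0 (tAct r R i v))
      = bT r R i ((piPow f (cmapL r e) * piPow g (cmapR r e)) (Finsupp.single 0 v)) := by
    intro e v
    rw [← bT_single]
    exact (comm_apply ((commute_piPow f (fun j => hfT i j) (cmapL r e)).mul_right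
      (commute_piPow g (fun j => hgT i j) (cmapR r e))) _).symm
  calc ev2 r R f g (bT r R i F)
      = F.sum fun e v => (piPow f (cmapL r e) * piPow g (cmapR r e))
          (Finsupp.single 0 (tAct r R i v)) := by
        show ev2 r R f g (Finsupp.mapRange.linearMap (tAct r R i) F) = _
        unfold ev2
        rw [Finsupp.mapRange.linearMap_apply,
          Finsupp.sum_mapRange_index (fun e => by rw [Finsupp.single_zero, map_zero])]
    _ = F.sum fun e v => bT r R i ((piPow f (cmapL r e) * piPow g (cmapR r e))
          (Finsupp.single 0 v)) := Finsupp.sum_congr fun e _ => h1 e _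
    _ = bT r R i (ev2 r R f g F) := by
        rw [← map_finsuppSum (bT r R i)]
        rfl

end AuxEv2

noncomputable section AuxHop2

variable (r : ℕ) (R : Type*) [AddCommGroup R] [Module ℂ R]
  [Module (MvPolynomial (Fin r) ℂ) R] [IsScalarTower ℂ (MvPolynomial (Fin r) ℂ) R]

set_option linter.unusedSectionVars false
set_option linter.unusedVariables false

variable (f g : Fin r → Module.End ℂ (BP r R))
  (hf : ∀ i j, Commute (f i) (f j)) (hg : ∀ i j, Commute (g i) (g j))
  (hgf : ∀ i j, Commute (g i) (f j))
  (hfT : ∀ i j, Commute (bT r R i) (f j)) (hgT : ∀ i j, Commute (bT r R i) (g j))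

include hf in
lemma hop2_FL : ∀ (i : Fin r) (X : BP r R),
    ev2 r R f g (FL r R i X) = f i (ev2 r R f g X) := fun i X =>
  ev2_bLam r R f g hf i X

include hg hgf in
lemma hop2_FM : ∀ (i : Fin r) (X : BP r R),
    ev2 r R f g (FM r R i X) = g i (ev2 r R f g X) := fun i X =>
  ev2_bMu r R f g hg hgf i X

include hf hg hgf in
lemma hop2_FLM : ∀ (i : Fin r) (X : BP r R),
    ev2 r R f g (FLM r R i X) = (f i + g i) (ev2 r R f g X) := by
  intro i X
  have h1 : FLM r R i X = bLam r R i X + bMu r R i X := by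
    show (bLam r R i + bMu r R i) X = _
    rw [LinearMap.add_apply]
  rw [h1, ← ev2H_apply, map_add, ev2H_apply, ev2H_apply, ev2_bLam r R f g hf,
    ev2_bMu r R f g hg hgf, LinearMap.add_apply]

include hg hgf hfT hgT in
lemma hop2_FNM : ∀ (i : Fin r) (X : BP r R),
    ev2 r R f g (FNM r R i X) = (-(g i) - bT r R i) (ev2 r R f g X) := by
  intro i X
  have h1 : FNM r R i X = -(bMu r R i X) - bT r R i X := by
    show (-(bMu r R i) - bT r R i) X = _
    rw [LinearMap.sub_apply, LinearMap.neg_apply]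
  rw [h1, ← ev2H_apply, map_sub, map_neg, ev2H_apply, ev2H_apply, ev2_bMu r R f g hg hgf,
    ev2_bT r R f g hfT hgT, LinearMap.sub_apply, LinearMap.neg_apply]

include hf hfT hgT in
lemma hop2_FNL : ∀ (i : Fin r) (X : BP r R),
    ev2 r R f g (FNL r R i X) = (-(f i) - bT r R i) (ev2 r R f g X) := by
  intro i X
  have h1 : FNL r R i X = -(bLam r R i X) - bT r R i X := by
    show (-(bLam r R i) - bT r R i) X = _
    rw [LinearMap.sub_apply, LinearMap.neg_apply]
  rw [h1, ← ev2H_apply, map_sub, map_neg, ev2H_apply, ev2H_apply, ev2_bLam r R f g hf,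
    ev2_bT r R f g hfT hgT, LinearMap.sub_apply, LinearMap.neg_apply]

include hf hg hgf hfT hgT in
lemma hop2_FNLM : ∀ (i : Fin r) (X : BP r R),
    ev2 r R f g (FNLM r R i X) = (-(f i) - g i - bT r R i) (ev2 r R f g X) := by
  intro i X
  have h1 : FNLM r R i X = -(bLam r R i X) - bMu r R i X - bT r R i X := by
    show (-(bLam r R i) - bMu r R i - bT r R i) X = _
    rw [LinearMap.sub_apply, LinearMap.sub_apply, LinearMap.neg_apply]
  rw [h1, ← ev2H_apply, map_sub, map_sub, map_neg, ev2H_apply, ev2H_apply, ev2H_apply,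
    ev2_bLam r R f g hf, ev2_bMu r R f g hg hgf, ev2_bT r R f g hfT hgT,
    LinearMap.sub_apply, LinearMap.sub_apply, LinearMap.neg_apply]

/-- `ev2` through `ev`. -/
lemma ev2_ev (ψ ψ' : Fin r → Module.End ℂ (BP r R))
    (hop : ∀ i X, ev2 r R f g (ψ i X) = ψ' i (ev2 r R f g X)) (W : VP r R) :
    ev2 r R f g (ev r R ψ W) = ev r R ψ' W := by
  have h1 := hom_ev r R (ev2H r R f g) ψ ψ' (fun i X => hop i X) W
  rw [ev2H_apply] at h1
  rw [h1, ev_def]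
  exact Finsupp.sum_congr fun k _ => by rw [ev2H_apply, ev2_single0]

/-- `ev2` through a canonical left-type term. -/
lemma ev2_cL (p : R → R → VP r R) (φ φ' ψ ψ' : Fin r → Module.End ℂ (BP r R))
    (hopφ : ∀ i X, ev2 r R f g (φ i X) = φ' i (ev2 r R f g X))
    (hopψ : ∀ i X, ev2 r R f g (ψ i X) = ψ' i (ev2 r R f g X)) (x y z : R) :
    ev2 r R f g (cL r R p φ ψ x y z) = cL r R p φ' ψ' x y z := by
  unfold cL
  rw [show ev2 r R f g = ⇑(ev2H r R f g) from rfl, map_finsuppSum]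
  apply Finsupp.sum_congr
  intro k _
  rw [piPow_push (ev2H r R f g) φ φ' (fun i X => hopφ i X) k]
  rw [ev2H_apply, ev2_ev r R f g ψ ψ' hopψ]

/-- `ev2` through a canonical right-type term. -/
lemma ev2_cR (p : R → R → VP r R) (φ φ' ψ ψ' : Fin r → Module.End ℂ (BP r R))
    (hopφ : ∀ i X, ev2 r R f g (φ i X) = φ' i (ev2 r R f g X))
    (hopψ : ∀ i X, ev2 r R f g (ψ i X) = ψ' i (ev2 r R f g X)) (x y z : R) :
    ev2 r R f g (cR r R p φ ψ x y z) = cR r R p φ' ψ' x y z := by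
  unfold cR
  rw [show ev2 r R f g = ⇑(ev2H r R f g) from rfl, map_finsuppSum]
  apply Finsupp.sum_congr
  intro k _
  rw [piPow_push (ev2H r R f g) φ φ' (fun i X => hopφ i X) k]
  rw [ev2H_apply, ev2_ev r R f g ψ ψ' hopψ]

end AuxHop2

section Sgn

lemma sgn_cases (α β : ZMod 2) : sgn α β = 1 ∨ sgn α β = -1 := by
  revert α β
  decide

lemma sgn_comm (α β : ZMod 2) : sgn α β = sgn β α := by
  revert α β
  decide

lemma sgn_mul_self (α β : ZMod 2) : sgn α β * sgn α β = 1 := by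
  revert α β
  decide

lemma sgn_add_right (α β γ : ZMod 2) : sgn α (β + γ) = sgn α β * sgn α γ := by
  revert α β γ
  decide

lemma sgn_add_left (α β γ : ZMod 2) : sgn (α + β) γ = sgn α γ * sgn β γ := by
  revert α β γ
  decide

end Sgn

noncomputable section AuxExpand

variable (r : ℕ) (R : Type*) [AddCommGroup R] [Module ℂ R]
  [Module (MvPolynomial (Fin r) ℂ) R] [IsScalarTower ℂ (MvPolynomial (Fin r) ℂ) R]
  (G : ZMod 2 → Submodule ℂ R) (p q : R → R → VP r R)

set_option linter.unusedSectionVars false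
set_option linter.unusedVariables false

lemma expand_evR (hbil : Bilin r R p)
    (hdef : ∀ (α β : ZMod 2) (a b : R), a ∈ G α → b ∈ G β →
      q a b = p a b - sgn α β • vNeg r R (p b a))
    (Φ Φt : Fin r → Module.End ℂ (BP r R))
    (hΦt : (fun i => -(Φ i) - bT r R i) = Φt)
    (hs : ∀ i j, Commute (Φ i) (Φ j)) (hsT : ∀ i j, Commute (bT r R i) (Φ j))
    (ξ δ : ZMod 2) (x : R) (hx : x ∈ G ξ) (H : BP r R) (hH : CW G δ H) :
    evR r R q Φ x H = evR r R p Φ x H - sgn ξ δ • evL r R p Φt H x := by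
  rw [evR_def r R q, evR_def r R p, evL_def r R p, Finsupp.smul_sum, ← Finsupp.sum_sub]
  apply Finsupp.sum_congr
  intro e he
  rw [hdef ξ δ x (H e) hx (hH e), ev_sub, ev_zsmul, ev_vNeg r R Φ hs hsT, hΦt,
    map_sub (bShift r R e), map_zsmul (bShift r R e)]

lemma expand_evL (hbil : Bilin r R p)
    (hdef : ∀ (α β : ZMod 2) (a b : R), a ∈ G α → b ∈ G β →
      q a b = p a b - sgn α β • vNeg r R (p b a))
    (Φ Φt : Fin r → Module.End ℂ (BP r R))
    (hΦt : (fun i => -(Φ i) - bT r R i) = Φt)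
    (hs : ∀ i j, Commute (Φ i) (Φ j)) (hsT : ∀ i j, Commute (bT r R i) (Φ j))
    (δ ζ : ZMod 2) (z : R) (hz : z ∈ G ζ) (H : BP r R) (hH : CW G δ H) :
    evL r R q Φ H z = evL r R p Φ H z - sgn δ ζ • evR r R p Φt z H := by
  rw [evL_def r R q, evL_def r R p, evR_def r R p, Finsupp.smul_sum, ← Finsupp.sum_sub]
  apply Finsupp.sum_congr
  intro e he
  rw [hdef δ ζ (H e) z (hH e) hz, ev_sub, ev_zsmul, ev_vNeg r R Φ hs hsT, hΦt,
    map_sub (bShift r R e), map_zsmul (bShift r R e)]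

/-! Commutation facts for the six standard families, in convenient form. -/

lemma comm_FL_FL : ∀ i j, Commute (FL r R i) (FL r R j) := fun i j =>
  Nice.commL r R (nice_FL r R j) i
lemma comm_FM_FM : ∀ i j, Commute (FM r R i) (FM r R j) := fun i j =>
  Nice.commM r R (nice_FM r R j) i
lemma comm_FLM_FLM : ∀ i j, Commute (FLM r R i) (FLM r R j) := fun i j =>
  Nice.commLM r R (nice_FLM r R j) i
lemma comm_FNL_FNL : ∀ i j, Commute (FNL r R i) (FNL r R j) := fun i j =>
  Nice.commNL r R (nice_FNL r R j) i
lemma comm_FNM_FNM : ∀ i j, Commute (FNM r R i) (FNM r R j) := fun i j =>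
  Nice.commNM r R (nice_FNM r R j) i
lemma comm_FNLM_FNLM : ∀ i j, Commute (FNLM r R i) (FNLM r R j) := fun i j =>
  Nice.commNLM r R (nice_FNLM r R j) i

lemma comm_T_FL : ∀ i j, Commute (bT r R i) (FL r R j) := fun i j =>
  Nice.commT r R (nice_FL r R j) i
lemma comm_T_FM : ∀ i j, Commute (bT r R i) (FM r R j) := fun i j =>
  Nice.commT r R (nice_FM r R j) i
lemma comm_T_FLM : ∀ i j, Commute (bT r R i) (FLM r R j) := fun i j =>
  Nice.commT r R (nice_FLM r R j) i
lemma comm_T_FNL : ∀ i j, Commute (bT r R i) (FNL r R j) := fun i j =>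
  Nice.commT r R (nice_FNL r R j) i
lemma comm_T_FNM : ∀ i j, Commute (bT r R i) (FNM r R j) := fun i j =>
  Nice.commT r R (nice_FNM r R j) i
lemma comm_T_FNLM : ∀ i j, Commute (bT r R i) (FNLM r R j) := fun i j =>
  Nice.commT r R (nice_FNLM r R j) i

lemma comm_FL_sh : ∀ i e, Commute (FL r R i) (bShift r R e) := fun i e =>
  (Nice.commL r R (nice_bShift r R e) i)
lemma comm_FM_sh : ∀ i e, Commute (FM r R i) (bShift r R e) := fun i e =>
  (Nice.commM r R (nice_bShift r R e) i)
lemma comm_FLM_sh : ∀ i e, Commute (FLM r R i) (bShift r R e) := fun i e =>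
  (Nice.commLM r R (nice_bShift r R e) i)
lemma comm_FNL_sh : ∀ i e, Commute (FNL r R i) (bShift r R e) := fun i e =>
  (Nice.commNL r R (nice_bShift r R e) i)
lemma comm_FNM_sh : ∀ i e, Commute (FNM r R i) (bShift r R e) := fun i e =>
  (Nice.commNM r R (nice_bShift r R e) i)
lemma comm_FNLM_sh : ∀ i e, Commute (FNLM r R i) (bShift r R e) := fun i e =>
  (Nice.commNLM r R (nice_bShift r R e) i)

/-! Extra family identities. -/

lemma famSum1 : (fun i => FNLM r R i + FL r R i) = FNM r R := by
  funext i
  show (-(bLam r R i) - bMu r R i - bT r R i) + bLam r R i = -(bMu r R i) - bT r R i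
  abel

lemma famSum2 : (fun i => FNLM r R i + FM r R i) = FNL r R := by
  funext i
  show (-(bLam r R i) - bMu r R i - bT r R i) + bMu r R i = -(bLam r R i) - bT r R i
  abel

lemma famSum3 : (fun i => FM r R i + FL r R i) = FLM r R := by
  funext i
  show bMu r R i + bLam r R i = bLam r R i + bMu r R i
  abel

lemma famSum4 : (fun i => FL r R i + FM r R i) = FLM r R := rfl

lemma famNeg1 : (fun i => -(FM r R i) - FL r R i - bT r R i) = FNLM r R := by
  funext i
  show -(bMu r R i) - bLam r R i - bT r R i = -(bLam r R i) - bMu r R i - bT r R i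
  abel

lemma famNeg2 : (fun i => -(FNLM r R i) - FL r R i - bT r R i) = FM r R := by
  funext i
  show -(-(bLam r R i) - bMu r R i - bT r R i) - bLam r R i - bT r R i = bMu r R i
  abel

/-! Canonical forms of the Novikov identities. -/

lemma N1_canon (hbil : Bilin r R p) (hN1 : NovLeft1 r R G p) :
    ∀ (α β : ZMod 2) (a b c : R), a ∈ G α → b ∈ G β →
      cL r R p (FL r R) (FLM r R) a b c - cR r R p (FM r R) (FL r R) a b c
        = sgn α β • (cL r R p (FM r R) (FLM r R) b a c
          - cR r R p (FL r R) (FM r R) b a c) := by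
  intro α β a b c ha hb
  have h := hN1 α β a b c ha hb
  rw [evL_ev r R p hbil (FLM r R) (FL r R) (FL r R) a b c
      (hopL_FL r R p hbil (FLM r R) c),
    evR_ev r R p hbil (FL r R) (FM r R) (FM r R) a b c
      (hopR_FM r R p hbil (FL r R) a),
    evL_ev r R p hbil (FLM r R) (FM r R) (FM r R) b a c
      (hopL_FM r R p hbil (FLM r R) c),
    evR_ev r R p hbil (FM r R) (FL r R) (FL r R) b a c
      (hopR_FL r R p hbil (FM r R) b)] at h
  exact h

lemma R1_canon (hbil : Bilin r R p) (hses : Sesq r R p) (hR1 : NovRight1 r R G p) :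
    ∀ (β γ : ZMod 2) (a b c : R), b ∈ G β → c ∈ G γ →
      cR r R p (FM r R) (FL r R) a b c - cL r R p (FL r R) (FLM r R) a b c
        = sgn β γ • (cR r R p (FNLM r R) (FL r R) a c b
          - cL r R p (FL r R) (FNM r R) a c b) := by
  intro β γ a b c hb hc
  have h := hR1 β γ a b c hb hc
  rw [evR_ev r R p hbil (FL r R) (FM r R) (FM r R) a b c
      (hopR_FM r R p hbil (FL r R) a),
    evL_ev r R p hbil (FLM r R) (FL r R) (FL r R) a b c
      (hopL_FL r R p hbil (FLM r R) c),
    evR_ev r R p hbil (FL r R) (FNM r R) (fun i => FNM r R i - FL r R i) a c b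
      (hopR_FNM r R p hbil hses (FL r R) (comm_FL_FL r R) (comm_T_FL r R)
        (comm_FL_sh r R) a),
    famA,
    evL_ev r R p hbil (FNM r R) (FL r R) (FL r R) a c b
      (hopL_FL r R p hbil (FNM r R) b)] at h
  exact h

/-! Substituted instances. -/

lemma N1_subst (hbil : Bilin r R p)
    (hc : ∀ (α β : ZMod 2) (a b c : R), a ∈ G α → b ∈ G β →
      cL r R p (FL r R) (FLM r R) a b c - cR r R p (FM r R) (FL r R) a b c
        = sgn α β • (cL r R p (FM r R) (FLM r R) b a c
          - cR r R p (FL r R) (FM r R) b a c))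
    (f g : Fin r → Module.End ℂ (BP r R))
    (hf : ∀ i j, Commute (f i) (f j)) (hg : ∀ i j, Commute (g i) (g j))
    (hgf : ∀ i j, Commute (g i) (f j)) :
    ∀ (α β : ZMod 2) (a b c : R), a ∈ G α → b ∈ G β →
      cL r R p f (fun i => f i + g i) a b c - cR r R p g f a b c
        = sgn α β • (cL r R p g (fun i => f i + g i) b a c - cR r R p f g b a c) := by
  intro α β a b c ha hb
  have h := congrArg (ev2 r R f g) (hc α β a b c ha hb)
  rw [show ev2 r R f g = ⇑(ev2H r R f g) from rfl, map_sub, map_zsmul, map_sub] at h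
  rw [ev2H_apply, ev2H_apply, ev2H_apply, ev2H_apply] at h
  rw [ev2_cL r R f g p (FL r R) f (FLM r R) (fun i => f i + g i)
      (hop2_FL r R f g hf) (hop2_FLM r R f g hf hg hgf),
    ev2_cR r R f g p (FM r R) g (FL r R) f
      (hop2_FM r R f g hg hgf) (hop2_FL r R f g hf),
    ev2_cL r R f g p (FM r R) g (FLM r R) (fun i => f i + g i)
      (hop2_FM r R f g hg hgf) (hop2_FLM r R f g hf hg hgf),
    ev2_cR r R f g p (FL r R) f (FM r R) g
      (hop2_FL r R f g hf) (hop2_FM r R f g hg hgf)] at h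
  exact h

lemma R1_subst (hbil : Bilin r R p)
    (hc : ∀ (β γ : ZMod 2) (a b c : R), b ∈ G β → c ∈ G γ →
      cR r R p (FM r R) (FL r R) a b c - cL r R p (FL r R) (FLM r R) a b c
        = sgn β γ • (cR r R p (FNLM r R) (FL r R) a c b
          - cL r R p (FL r R) (FNM r R) a c b))
    (f g : Fin r → Module.End ℂ (BP r R))
    (hf : ∀ i j, Commute (f i) (f j)) (hg : ∀ i j, Commute (g i) (g j))
    (hgf : ∀ i j, Commute (g i) (f j))
    (hfT : ∀ i j, Commute (bT r R i) (f j)) (hgT : ∀ i j, Commute (bT r R i) (g j)) :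
    ∀ (β γ : ZMod 2) (a b c : R), b ∈ G β → c ∈ G γ →
      cR r R p g f a b c - cL r R p f (fun i => f i + g i) a b c
        = sgn β γ • (cR r R p (fun i => -(f i) - g i - bT r R i) f a c b
          - cL r R p f (fun i => -(g i) - bT r R i) a c b) := by
  intro β γ a b c hb hcm
  have h := congrArg (ev2 r R f g) (hc β γ a b c hb hcm)
  rw [show ev2 r R f g = ⇑(ev2H r R f g) from rfl, map_sub, map_zsmul, map_sub] at h
  rw [ev2H_apply, ev2H_apply, ev2H_apply, ev2H_apply] at h
  rw [ev2_cR r R f g p (FM r R) g (FL r R) f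
      (hop2_FM r R f g hg hgf) (hop2_FL r R f g hf),
    ev2_cL r R f g p (FL r R) f (FLM r R) (fun i => f i + g i)
      (hop2_FL r R f g hf) (hop2_FLM r R f g hf hg hgf),
    ev2_cR r R f g p (FNLM r R) (fun i => -(f i) - g i - bT r R i) (FL r R) f
      (hop2_FNLM r R f g hf hg hgf hfT hgT) (hop2_FL r R f g hf),
    ev2_cL r R f g p (FL r R) f (FNM r R) (fun i => -(g i) - bT r R i)
      (hop2_FL r R f g hf) (hop2_FNM r R f g hg hgf hfT hgT)] at h
  exact h

end AuxExpand

noncomputable section AuxExpand2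

variable (r : ℕ) (R : Type*) [AddCommGroup R] [Module ℂ R]
  [Module (MvPolynomial (Fin r) ℂ) R] [IsScalarTower ℂ (MvPolynomial (Fin r) ℂ) R]
  (G : ZMod 2 → Submodule ℂ R) (p q : R → R → VP r R)

set_option linter.unusedSectionVars false
set_option linter.unusedVariables false

variable (hbil : Bilin r R p) (hses : Sesq r R p) (hpar : ParityPres r R G p)
  (hGX : ∀ (i : Fin r) (α : ZMod 2) (v : R), v ∈ G α →
    (X i : MvPolynomial (Fin r) ℂ) • v ∈ G α)
  (hdef : ∀ (α β : ZMod 2) (a b : R), a ∈ G α → b ∈ G β →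
    q a b = p a b - sgn α β • vNeg r R (p b a))

include hbil hses hpar hGX hdef

lemma expandL (α β γ : ZMod 2) (a b c : R) (ha : a ∈ G α) (hb : b ∈ G β) (hc : c ∈ G γ) :
    evR r R q (FL r R) a (ev r R (FM r R) (q b c)) =
      (cR r R p (FM r R) (FL r R) a b c
        - sgn β γ • cR r R p (FNLM r R) (FL r R) a c b)
      - sgn α (β + γ) • (cL r R p (FM r R) (FNL r R) b c a
        - sgn β γ • cL r R p (FNLM r R) (FNL r R) c b a) := by
  have hpbc : CW G (β + γ) (p b c) := fun k => hpar β γ b c hb hc k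
  have hpcb : CW G (β + γ) (p c b) := fun k => by
    rw [add_comm β γ]
    exact hpar γ β c b hc hb k
  have step1 : ev r R (FM r R) (q b c)
      = ev r R (FM r R) (p b c) - sgn β γ • ev r R (FNM r R) (p c b) := by
    rw [hdef β γ b c hb hc, ev_sub, ev_zsmul,
      ev_vNeg r R (FM r R) (comm_FM_FM r R) (comm_T_FM r R), famNM]
  have step2 : CW G (β + γ)
      (ev r R (FM r R) (p b c) - sgn β γ • ev r R (FNM r R) (p c b)) :=
    CW_sub (CW_ev r R hGX (FM r R) (Or.inr (Or.inl rfl)) hpbc)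
      (CW_zsmul _ (CW_ev r R hGX (FNM r R) (Or.inr (Or.inr (Or.inr (Or.inr (Or.inl rfl)))))
        hpcb))
  rw [step1, expand_evR r R G p q hbil hdef (FL r R) (FNL r R) (famNL r R)
    (comm_FL_FL r R) (comm_T_FL r R) α (β + γ) a ha _ step2]
  rw [show evR r R p (FL r R) a
        (ev r R (FM r R) (p b c) - sgn β γ • ev r R (FNM r R) (p c b))
      = evR r R p (FL r R) a (ev r R (FM r R) (p b c))
        - sgn β γ • evR r R p (FL r R) a (ev r R (FNM r R) (p c b)) by
    rw [← evRH_apply r R p hbil, map_sub, map_zsmul, evRH_apply, evRH_apply]]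
  rw [show evL r R p (FNL r R)
        (ev r R (FM r R) (p b c) - sgn β γ • ev r R (FNM r R) (p c b)) a
      = evL r R p (FNL r R) (ev r R (FM r R) (p b c)) a
        - sgn β γ • evL r R p (FNL r R) (ev r R (FNM r R) (p c b)) a by
    rw [← evLH_apply r R p hbil, map_sub, map_zsmul, evLH_apply, evLH_apply]]
  rw [evR_ev r R p hbil (FL r R) (FM r R) (FM r R) a b c
      (hopR_FM r R p hbil (FL r R) a),
    evR_ev r R p hbil (FL r R) (FNM r R) (fun i => FNM r R i - FL r R i) a c b
      (hopR_FNM r R p hbil hses (FL r R) (comm_FL_FL r R) (comm_T_FL r R)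
        (comm_FL_sh r R) a),
    famA,
    evL_ev r R p hbil (FNL r R) (FM r R) (FM r R) b c a
      (hopL_FM r R p hbil (FNL r R) a),
    evL_ev r R p hbil (FNL r R) (FNM r R) (fun i => FNL r R i - FM r R i) c b a
      (hopL_FNM r R p hbil hses (FNL r R) (comm_FNL_FNL r R) (comm_FNL_sh r R) a),
    famB]

lemma expandM (α β γ : ZMod 2) (a b c : R) (ha : a ∈ G α) (hb : b ∈ G β) (hc : c ∈ G γ) :
    evL r R q (FLM r R) (ev r R (FL r R) (q a b)) c =
      (cL r R p (FL r R) (FLM r R) a b c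
        - sgn α β • cL r R p (FM r R) (FLM r R) b a c)
      - sgn (α + β) γ • (cR r R p (FL r R) (FNLM r R) c a b
        - sgn α β • cR r R p (FM r R) (FNLM r R) c b a) := by
  have hpab : CW G (α + β) (p a b) := fun k => hpar α β a b ha hb k
  have hpba : CW G (α + β) (p b a) := fun k => by
    rw [add_comm α β]
    exact hpar β α b a hb ha k
  have step1 : ev r R (FL r R) (q a b)
      = ev r R (FL r R) (p a b) - sgn α β • ev r R (FNL r R) (p b a) := by
    rw [hdef α β a b ha hb, ev_sub, ev_zsmul,
      ev_vNeg r R (FL r R) (comm_FL_FL r R) (comm_T_FL r R), famNL]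
  have step2 : CW G (α + β)
      (ev r R (FL r R) (p a b) - sgn α β • ev r R (FNL r R) (p b a)) :=
    CW_sub (CW_ev r R hGX (FL r R) (Or.inl rfl) hpab)
      (CW_zsmul _ (CW_ev r R hGX (FNL r R) (Or.inr (Or.inr (Or.inr (Or.inl rfl)))) hpba))
  rw [step1, expand_evL r R G p q hbil hdef (FLM r R) (FNLM r R) (famNLM r R)
    (comm_FLM_FLM r R) (comm_T_FLM r R) (α + β) γ c hc _ step2]
  rw [show evL r R p (FLM r R)
        (ev r R (FL r R) (p a b) - sgn α β • ev r R (FNL r R) (p b a)) c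
      = evL r R p (FLM r R) (ev r R (FL r R) (p a b)) c
        - sgn α β • evL r R p (FLM r R) (ev r R (FNL r R) (p b a)) c by
    rw [← evLH_apply r R p hbil, map_sub, map_zsmul, evLH_apply, evLH_apply]]
  rw [show evR r R p (FNLM r R) c
        (ev r R (FL r R) (p a b) - sgn α β • ev r R (FNL r R) (p b a))
      = evR r R p (FNLM r R) c (ev r R (FL r R) (p a b))
        - sgn α β • evR r R p (FNLM r R) c (ev r R (FNL r R) (p b a)) by
    rw [← evRH_apply r R p hbil, map_sub, map_zsmul, evRH_apply, evRH_apply]]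
  rw [evL_ev r R p hbil (FLM r R) (FL r R) (FL r R) a b c
      (hopL_FL r R p hbil (FLM r R) c),
    evL_ev r R p hbil (FLM r R) (FNL r R) (fun i => FLM r R i - FL r R i) b a c
      (hopL_FNL r R p hbil hses (FLM r R) (comm_FLM_FLM r R) (comm_FLM_sh r R) c),
    famC,
    evR_ev r R p hbil (FNLM r R) (FL r R) (FL r R) c a b
      (hopR_FL r R p hbil (FNLM r R) c),
    evR_ev r R p hbil (FNLM r R) (FNL r R) (fun i => FNL r R i - FNLM r R i) c b a
      (hopR_FNL r R p hbil hses (FNLM r R) (comm_FNLM_FNLM r R) (comm_T_FNLM r R)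
        (comm_FNLM_sh r R) c),
    famD]

lemma expandR (α β γ : ZMod 2) (a b c : R) (ha : a ∈ G α) (hb : b ∈ G β) (hc : c ∈ G γ) :
    evR r R q (FM r R) b (ev r R (FL r R) (q a c)) =
      (cR r R p (FL r R) (FM r R) b a c
        - sgn α γ • cR r R p (FNLM r R) (FM r R) b c a)
      - sgn β (α + γ) • (cL r R p (FL r R) (FNM r R) a c b
        - sgn α γ • cL r R p (FNLM r R) (FNM r R) c a b) := by
  have hpac : CW G (α + γ) (p a c) := fun k => hpar α γ a c ha hc k
  have hpca : CW G (α + γ) (p c a) := fun k => by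
    rw [add_comm α γ]
    exact hpar γ α c a hc ha k
  have step1 : ev r R (FL r R) (q a c)
      = ev r R (FL r R) (p a c) - sgn α γ • ev r R (FNL r R) (p c a) := by
    rw [hdef α γ a c ha hc, ev_sub, ev_zsmul,
      ev_vNeg r R (FL r R) (comm_FL_FL r R) (comm_T_FL r R), famNL]
  have step2 : CW G (α + γ)
      (ev r R (FL r R) (p a c) - sgn α γ • ev r R (FNL r R) (p c a)) :=
    CW_sub (CW_ev r R hGX (FL r R) (Or.inl rfl) hpac)
      (CW_zsmul _ (CW_ev r R hGX (FNL r R) (Or.inr (Or.inr (Or.inr (Or.inl rfl)))) hpca))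
  rw [step1, expand_evR r R G p q hbil hdef (FM r R) (FNM r R) (famNM r R)
    (comm_FM_FM r R) (comm_T_FM r R) β (α + γ) b hb _ step2]
  rw [show evR r R p (FM r R) b
        (ev r R (FL r R) (p a c) - sgn α γ • ev r R (FNL r R) (p c a))
      = evR r R p (FM r R) b (ev r R (FL r R) (p a c))
        - sgn α γ • evR r R p (FM r R) b (ev r R (FNL r R) (p c a)) by
    rw [← evRH_apply r R p hbil, map_sub, map_zsmul, evRH_apply, evRH_apply]]
  rw [show evL r R p (FNM r R)
        (ev r R (FL r R) (p a c) - sgn α γ • ev r R (FNL r R) (p c a)) b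
      = evL r R p (FNM r R) (ev r R (FL r R) (p a c)) b
        - sgn α γ • evL r R p (FNM r R) (ev r R (FNL r R) (p c a)) b by
    rw [← evLH_apply r R p hbil, map_sub, map_zsmul, evLH_apply, evLH_apply]]
  rw [evR_ev r R p hbil (FM r R) (FL r R) (FL r R) b a c
      (hopR_FL r R p hbil (FM r R) b),
    evR_ev r R p hbil (FM r R) (FNL r R) (fun i => FNL r R i - FM r R i) b c a
      (hopR_FNL r R p hbil hses (FM r R) (comm_FM_FM r R) (comm_T_FM r R)
        (comm_FM_sh r R) b),
    famB,
    evL_ev r R p hbil (FNM r R) (FL r R) (FL r R) a c b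
      (hopL_FL r R p hbil (FNM r R) b),
    evL_ev r R p hbil (FNM r R) (FNL r R) (fun i => FNM r R i - FL r R i) c a b
      (hopL_FNL r R p hbil hses (FNM r R) (comm_FNM_FNM r R) (comm_FNM_sh r R) b),
    famA]

end AuxExpand2

lemma extend2 {S : Type*} [AddCommGroup S] [Module ℂ S] (G : ZMod 2 → Submodule ℂ S)
    (hI : DirectSum.IsInternal G) (P : S → S → Prop)
    (h0l : ∀ b, P 0 b) (haddl : ∀ a a' b, P a b → P a' b → P (a + a') b)
    (h0r : ∀ a, P a 0) (haddr : ∀ a b b', P a b → P a b' → P a (b + b'))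
    (hhom : ∀ (α β : ZMod 2) (a b : S), a ∈ G α → b ∈ G β → P a b) : ∀ a b, P a b := by
  have htop : ∀ x : S, x ∈ ⨆ i, G i := by
    intro x
    rw [hI.submodule_iSup_eq_top]
    exact Submodule.mem_top
  intro a b
  refine Submodule.iSup_induction (motive := fun x => P x b) G (htop a) ?_ (h0l b)
    (fun x y hx hy => haddl x y b hx hy)
  intro α x hx
  refine Submodule.iSup_induction (motive := fun y => P x y) G (htop b) ?_ (h0r x)
    (fun u v hu hv => haddr x u v hu hv)
  intro β y hy
  exact hhom α β x y hx hy

noncomputable section Final2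

variable (r : ℕ) (R : Type*) [AddCommGroup R] [Module ℂ R]
  [Module (MvPolynomial (Fin r) ℂ) R] [IsScalarTower ℂ (MvPolynomial (Fin r) ℂ) R]

set_option linter.unusedSectionVars false
set_option linter.unusedVariables false

variable (q : R → R → VP r R)

lemma qz1 (hq : Bilin r R q) (b : R) : q 0 b = 0 := pzero_left r R q hq.1 b

lemma qz2 (hq : Bilin r R q) (a : R) : q a 0 = 0 := pzero_right r R q hq.2.1 a

lemma evL_z_add (hq : Bilin r R q) (s : Fin r → Module.End ℂ (BP r R)) (F : BP r R)
    (z z' : R) : evL r R q s F (z + z') = evL r R q s F z + evL r R q s F z' := by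
  rw [evL_def, evL_def, evL_def, ← Finsupp.sum_add]
  apply Finsupp.sum_congr
  intro e _
  rw [hq.2.1, ev_add, map_add]

lemma evL_z_zero (hq : Bilin r R q) (s : Fin r → Module.End ℂ (BP r R)) (F : BP r R) :
    evL r R q s F 0 = 0 := by
  rw [evL_def]
  calc F.sum (fun e v => bShift r R e (ev r R s (q v 0)))
      = F.sum fun e v => (0 : BP r R) :=
        Finsupp.sum_congr fun e _ => by rw [qz2 r R q hq, ev_zero, map_zero]
    _ = 0 := Finset.sum_const_zero

end Final2

/-- If `(R, ·_λ·)` is an `r`-dimensional left (respectively, right) Novikov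
conformal superalgebra, then `R` with the `λ`-bracket
`[a_λ b] = a_λ b − (−1)^{αβ} (b_{−λ−T} a)` (for homogeneous `a, b`) is an `r`-dimensional
Lie conformal superalgebra. -/
theorem statement_2 (r : ℕ) (R : Type*) [AddCommGroup R] [Module ℂ R]
    [Module (MvPolynomial (Fin r) ℂ) R] [IsScalarTower ℂ (MvPolynomial (Fin r) ℂ) R]
    (G : ZMod 2 → Submodule ℂ R) (hG : IsGraded r R G)
    (p : R → R → VP r R)
    (hp : IsNovLeft r R G p ∨ IsNovRight r R G p)
    (q : R → R → VP r R) (hq : Bilin r R q)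
    (hdef : ∀ (α β : ZMod 2) (a b : R), a ∈ G α → b ∈ G β →
      q a b = p a b - sgn α β • vNeg r R (p b a)) :
    IsLieConfSuper r R G q := by
  have hbil : Bilin r R p := hp.elim (fun h => h.1) (fun h => h.1)
  have hpar : ParityPres r R G p := hp.elim (fun h => h.2.1) (fun h => h.2.1)
  have hses : Sesq r R p := hp.elim (fun h => h.2.2.1) (fun h => h.2.2.1)
  have hGX := hG.2
  refine ⟨hq, ?_, ?_, ?_, ?_⟩
  · -- ParityPres
    intro α β a b ha hb k
    rw [hdef α β a b ha hb, Finsupp.sub_apply]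
    have h1 : CW G (α + β) (p b a) := fun k' => by
      rw [add_comm α β]
      exact hpar β α b a hb ha k'
    exact sub_mem (hpar α β a b ha hb k)
      (CW_zsmul (G := G) _ (CW_vNeg r R hGX h1) k)
  · -- Sesq
    intro i a b
    have key : ∀ a b : R,
        (q ((X i : MvPolynomial (Fin r) ℂ) • a) b = (-(vLam r R i)) (q a b)) ∧
        (q a ((X i : MvPolynomial (Fin r) ℂ) • b) = (vT r R i + vLam r R i) (q a b)) := by
      apply extend2 G hG.1
      · intro b
        constructor
        · rw [smul_zero, qz1 r R q hq, map_zero]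
        · rw [qz1 r R q hq, qz1 r R q hq, map_zero]
      · intro a a' b ⟨h1, h2⟩ ⟨h1', h2'⟩
        constructor
        · rw [smul_add, hq.1, hq.1, h1, h1', map_add]
        · rw [hq.1, hq.1, h2, h2', map_add]
      · intro a
        constructor
        · rw [qz2 r R q hq, qz2 r R q hq, map_zero]
        · rw [smul_zero, qz2 r R q hq, map_zero]
      · intro a b b' ⟨h1, h2⟩ ⟨h1', h2'⟩
        constructor
        · rw [hq.2.1, hq.2.1, h1, h1', map_add]
        · rw [smul_add, hq.2.1, hq.2.1, h2, h2', map_add]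
      · intro α β a b ha hb
        have hXa : (X i : MvPolynomial (Fin r) ℂ) • a ∈ G α := hGX i α a ha
        have hXb : (X i : MvPolynomial (Fin r) ℂ) • b ∈ G β := hGX i β b hb
        have hnn : ∀ (W : VP r R),
            vNeg r R ((vT r R i + vLam r R i) W) = -(vLam r R i (vNeg r R W)) := by
          intro W
          have h3 : (vT r R i + vLam r R i) W = vT r R i W + vLam r R i W := by
            rw [LinearMap.add_apply]
          rw [h3, vNeg_add, vNeg_vT, vNeg_vLam, LinearMap.sub_apply, LinearMap.neg_apply]
          abel
        constructor
        · rw [hdef α β _ b hXa hb, hdef α β a b ha hb, (hses i a b).1, (hses i b a).2,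
            hnn (p b a)]
          simp only [LinearMap.neg_apply]
          rw [map_sub (vLam r R i), map_zsmul (vLam r R i)]
          rcases sgn_cases α β with hu | hu <;> rw [hu]
          · rw [one_smul, one_smul]
            abel
          · rw [neg_one_smul, neg_one_smul]
            abel
        · rw [hdef α β a _ ha hXb, hdef α β a b ha hb, (hses i a b).2, (hses i b a).1,
            show vNeg r R ((-(vLam r R i)) (p b a))
                = vLam r R i (vNeg r R (p b a)) + vT r R i (vNeg r R (p b a)) by
              rw [LinearMap.neg_apply, show vNeg r R = ⇑(vNegH r R) from rfl, map_neg,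
                vNegH_apply, vNeg_vLam, LinearMap.sub_apply, LinearMap.neg_apply]
              abel]
          simp only [LinearMap.add_apply]
          rw [map_sub (vT r R i), map_zsmul (vT r R i), map_sub (vLam r R i),
            map_zsmul (vLam r R i)]
          rcases sgn_cases α β with hu | hu <;> rw [hu]
          · rw [one_smul, one_smul, one_smul]
            abel
          · rw [neg_one_smul, neg_one_smul, neg_one_smul]
            abel
    exact ⟨(key a b).1, (key a b).2⟩
  · -- Skew
    intro α β a b ha hb
    rw [hdef α β a b ha hb, hdef β α b a hb ha, vNeg_sub, vNeg_zsmul, vNeg_vNeg,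
      sgn_comm β α]
    rcases sgn_cases α β with hu | hu <;> rw [hu]
    · rw [one_smul, one_smul, one_smul]
      abel
    · rw [neg_one_smul, neg_one_smul, neg_one_smul]
      abel
  · -- Jacobi
    intro α β a b c ha hb
    have htop : c ∈ ⨆ i, G i := by
      rw [hG.1.submodule_iSup_eq_top]
      exact Submodule.mem_top
    refine Submodule.iSup_induction
      (motive := fun c => evR r R q (FL r R) a (ev r R (FM r R) (q b c)) =
        evL r R q (FLM r R) (ev r R (FL r R) (q a b)) c +
        sgn α β • evR r R q (FM r R) b (ev r R (FL r R) (q a c)))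
      G htop ?_ ?_ ?_
    · -- homogeneous c
      intro γ c hc
      try dsimp only
      rw [expandL r R G p q hbil hses hpar hGX hdef α β γ a b c ha hb hc,
        expandM r R G p q hbil hses hpar hGX hdef α β γ a b c ha hb hc,
        expandR r R G p q hbil hses hpar hGX hdef α β γ a b c ha hb hc]
      -- instances of the Novikov identities
      rcases hp with hpl | hpr
      · -- left Novikov
        have hN1 := hpl.2.2.2.1
        have hcanon := N1_canon r R G p hbil hN1
        have h0 := hcanon α β a b c ha hb
        have h1 := N1_subst r R G p hbil hcanon (FNLM r R) (FL r R)
          (comm_FNLM_FNLM r R) (comm_FL_FL r R)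
          (fun i j => Nice.commL r R (nice_FNLM r R j) i) γ α c a b hc ha
        rw [famSum1] at h1
        have h2 := N1_subst r R G p hbil hcanon (FNLM r R) (FM r R)
          (comm_FNLM_FNLM r R) (comm_FM_FM r R)
          (fun i j => Nice.commM r R (nice_FNLM r R j) i) γ β c b a hc hb
        rw [famSum2] at h2
        set t1 := cR r R p (FM r R) (FL r R) a b c with ht1
        set t2 := cR r R p (FNLM r R) (FL r R) a c b with ht2
        set t3 := cL r R p (FM r R) (FNL r R) b c a with ht3
        set t4 := cL r R p (FNLM r R) (FNL r R) c b a with ht4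
        set t5 := cL r R p (FL r R) (FLM r R) a b c with ht5
        set t6 := cL r R p (FM r R) (FLM r R) b a c with ht6
        set t7 := cR r R p (FL r R) (FNLM r R) c a b with ht7
        set t8 := cR r R p (FM r R) (FNLM r R) c b a with ht8
        set t9 := cR r R p (FL r R) (FM r R) b a c with ht9
        set t10 := cR r R p (FNLM r R) (FM r R) b c a with ht10
        set t11 := cL r R p (FL r R) (FNM r R) a c b with ht11
        set t12 := cL r R p (FNLM r R) (FNM r R) c a b with ht12
        rw [sgn_add_right α β γ, sgn_add_left α β γ, sgn_add_right β α γ, sgn_comm β α]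
        rw [sgn_comm γ α] at h1
        rw [sgn_comm γ β] at h2
        rcases sgn_cases α β with hu | hu <;> rcases sgn_cases α γ with hv | hv <;>
          rcases sgn_cases β γ with hw | hw <;>
          simp only [hu, hv, hw] at h0 h1 h2 ⊢ <;>
          simp only [one_smul, neg_one_smul, mul_one, one_mul, mul_neg, neg_neg, smul_neg,
            neg_one_mul] at h0 h1 h2 ⊢ <;>
          rw [sub_eq_iff_eq_add.mp h0, sub_eq_iff_eq_add.mp h1, sub_eq_iff_eq_add.mp h2] <;>
          abel
      · -- right Novikov
        have hR1 := hpr.2.2.2.1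
        have hcanon := R1_canon r R G p hbil hses hR1
        have j0 := hcanon β γ a b c hb hc
        have j1 := R1_subst r R G p hbil hcanon (FM r R) (FL r R)
          (comm_FM_FM r R) (comm_FL_FL r R)
          (fun i j => Nice.commL r R (nice_FM r R j) i)
          (comm_T_FM r R) (comm_T_FL r R) α γ b a c ha hc
        rw [famSum3, famNeg1, famNL] at j1
        have j2 := R1_subst r R G p hbil hcanon (FNLM r R) (FL r R)
          (comm_FNLM_FNLM r R) (comm_FL_FL r R)
          (fun i j => Nice.commL r R (nice_FNLM r R j) i)
          (comm_T_FNLM r R) (comm_T_FL r R) α β c a b ha hb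
        rw [famSum1, famNeg2, famNL] at j2
        set t1 := cR r R p (FM r R) (FL r R) a b c with ht1
        set t2 := cR r R p (FNLM r R) (FL r R) a c b with ht2
        set t3 := cL r R p (FM r R) (FNL r R) b c a with ht3
        set t4 := cL r R p (FNLM r R) (FNL r R) c b a with ht4
        set t5 := cL r R p (FL r R) (FLM r R) a b c with ht5
        set t6 := cL r R p (FM r R) (FLM r R) b a c with ht6
        set t7 := cR r R p (FL r R) (FNLM r R) c a b with ht7
        set t8 := cR r R p (FM r R) (FNLM r R) c b a with ht8
        set t9 := cR r R p (FL r R) (FM r R) b a c with ht9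
        set t10 := cR r R p (FNLM r R) (FM r R) b c a with ht10
        set t11 := cL r R p (FL r R) (FNM r R) a c b with ht11
        set t12 := cL r R p (FNLM r R) (FNM r R) c a b with ht12
        rw [sgn_add_right α β γ, sgn_add_left α β γ, sgn_add_right β α γ, sgn_comm β α]
        rcases sgn_cases α β with hu | hu <;> rcases sgn_cases α γ with hv | hv <;>
          rcases sgn_cases β γ with hw | hw <;>
          simp only [hu, hv, hw] at j0 j1 j2 ⊢ <;>
          simp only [one_smul, neg_one_smul, mul_one, one_mul, mul_neg, neg_neg, smul_neg,
            neg_one_mul] at j0 j1 j2 ⊢ <;>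
          rw [sub_eq_iff_eq_add.mp j0, sub_eq_iff_eq_add.mp j1, sub_eq_iff_eq_add.mp j2] <;>
          abel
    · -- c = 0
      try dsimp only
      rw [qz2 r R q hq, ev_zero, show evR r R q (FL r R) a 0 = 0 from
          map_zero (evRH r R q hq (FL r R) a),
        evL_z_zero r R q hq, qz2 r R q hq, ev_zero, show evR r R q (FM r R) b 0 = 0 from
          map_zero (evRH r R q hq (FM r R) b), smul_zero, add_zero]
    · -- additivity in c
      intro x y hx hy
      try dsimp only at hx hy ⊢
      rw [hq.2.1, ev_add, show ∀ A B, evR r R q (FL r R) a (A + B)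
            = evR r R q (FL r R) a A + evR r R q (FL r R) a B from
          fun A B => evR_add r R q hq (FL r R) a A B,
        hx, hy, evL_z_add r R q hq, hq.2.1, ev_add,
        show ∀ A B, evR r R q (FM r R) b (A + B)
            = evR r R q (FM r R) b A + evR r R q (FM r R) b B from
          fun A B => evR_add r R q hq (FM r R) b A B, smul_add]
      abel
end CA
end

section
/- Let (V, [·,·], ∘) be a Gel'fand-Dorfman bialgebra. Then A = V ⊗ ℂ[t, t⁻¹] is a Gel'fand-Dorfman bialgebra with Novikov operation (a ⊗ t^m) ∗ (b ⊗ t^n) = (a ∘ b) ⊗ t^{m+n} and Lie bracket [a ⊗ t^m, b ⊗ t^n] = (m(a ∘ b) − n(b ∘ a)) ⊗ t^{m+n−1} + [b, a] ⊗ t^{m+n}, for a, b ∈ V and m, n ∈ ℤ. -/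
open Finsupp MvPolynomial
open scoped TensorProduct

namespace CA

/-! Auxiliary machinery for statement 10. -/

section St10Aux
open Finsupp
set_option linter.unusedSectionVars false

variable {V : Type} [AddCommGroup V] [Module ℂ V]

noncomputable def st10br2 (Φ : ℤ → ℤ → V → V → (ℤ →₀ V)) (F G : ℤ →₀ V) : ℤ →₀ V :=
  F.sum fun m a => G.sum fun n b => Φ m n a b

noncomputable def st10Phiq (lie nov : V → V → V) : ℤ → ℤ → V → V → (ℤ →₀ V) := fun mm nn a b =>
  mm • Finsupp.single (mm + nn - 1) (nov a b) - nn • Finsupp.single (mm + nn - 1) (nov b a) +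
    Finsupp.single (mm + nn) (lie b a)

noncomputable def st10Phip (nov : V → V → V) : ℤ → ℤ → V → V → (ℤ →₀ V) := fun mm nn a b =>
  Finsupp.single (mm + nn) (nov a b)

variable {Φ : ℤ → ℤ → V → V → (ℤ →₀ V)}
  (hl : ∀ m n a a' b, Φ m n (a + a') b = Φ m n a b + Φ m n a' b)
  (hr : ∀ m n a b b', Φ m n a (b + b') = Φ m n a b + Φ m n a b')
  (h0l : ∀ m n b, Φ m n 0 b = 0) (h0r : ∀ m n a, Φ m n a 0 = 0)

include h0l h0r in
theorem st10_single_single (m n : ℤ) (a b : V) :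
    st10br2 Φ (single m a) (single n b) = Φ m n a b := by
  unfold st10br2
  rw [Finsupp.sum_single_index (by simp [Finsupp.sum_single_index, h0l])]
  exact Finsupp.sum_single_index (h0r m n a)

theorem st10_zero_left (G : ℤ →₀ V) : st10br2 Φ 0 G = 0 := Finsupp.sum_zero_index

theorem st10_zero_right (F : ℤ →₀ V) : st10br2 Φ F 0 = 0 := by
  unfold st10br2; simp [Finsupp.sum_zero_index]

include hl h0l in
theorem st10_add_left (F F' G : ℤ →₀ V) :
    st10br2 Φ (F + F') G = st10br2 Φ F G + st10br2 Φ F' G := by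
  unfold st10br2
  rw [Finsupp.sum_add_index']
  · intro m; simp [h0l]
  · intro m a a'; rw [← Finsupp.sum_add]; exact Finsupp.sum_congr fun n _ => hl m n a a' _

include hr h0r in
theorem st10_add_right (F G G' : ℤ →₀ V) :
    st10br2 Φ F (G + G') = st10br2 Φ F G + st10br2 Φ F G' := by
  unfold st10br2
  rw [← Finsupp.sum_add]
  refine Finsupp.sum_congr fun m _ => ?_
  rw [Finsupp.sum_add_index']
  · intro n; exact h0r m n _
  · intro n b b'; exact hr m n _ b b'

include hl h0l in
theorem st10_zsmul_left (k : ℤ) (F G : ℤ →₀ V) :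
    st10br2 Φ (k • F) G = k • st10br2 Φ F G :=
  map_zsmul (AddMonoidHom.mk' (fun F => st10br2 Φ F G)
    (fun F F' => st10_add_left hl h0l F F' G)) k F

include hr h0r in
theorem st10_zsmul_right (k : ℤ) (F G : ℤ →₀ V) :
    st10br2 Φ F (k • G) = k • st10br2 Φ F G :=
  map_zsmul (AddMonoidHom.mk' (fun G => st10br2 Φ F G)
    (fun G G' => st10_add_right hr h0r F G G')) k G

include hl h0l in
theorem st10_sub_left (F F' G : ℤ →₀ V) :
    st10br2 Φ (F - F') G = st10br2 Φ F G - st10br2 Φ F' G :=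
  map_sub (AddMonoidHom.mk' (fun F => st10br2 Φ F G)
    (fun F F' => st10_add_left hl h0l F F' G)) F F'

include hr h0r in
theorem st10_sub_right (F G G' : ℤ →₀ V) :
    st10br2 Φ F (G - G') = st10br2 Φ F G - st10br2 Φ F G' :=
  map_sub (AddMonoidHom.mk' (fun G => st10br2 Φ F G)
    (fun G G' => st10_add_right hr h0r F G G')) G G'

variable (hsl : ∀ (z : ℂ) m n a b, Φ m n (z • a) b = z • Φ m n a b)
  (hsr : ∀ (z : ℂ) m n a b, Φ m n a (z • b) = z • Φ m n a b)

include h0l hsl in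
theorem st10_smul_left (z : ℂ) (F G : ℤ →₀ V) :
    st10br2 Φ (z • F) G = z • st10br2 Φ F G := by
  unfold st10br2
  rw [Finsupp.sum_smul_index' (fun i => by simp [h0l]), Finsupp.smul_sum]
  refine Finsupp.sum_congr fun m _ => ?_
  rw [Finsupp.smul_sum]
  exact Finsupp.sum_congr fun n _ => hsl z m n _ _

include h0r hsr in
theorem st10_smul_right (z : ℂ) (F G : ℤ →₀ V) :
    st10br2 Φ F (z • G) = z • st10br2 Φ F G := by
  unfold st10br2
  rw [Finsupp.smul_sum]
  refine Finsupp.sum_congr fun m hm => ?_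
  rw [Finsupp.sum_smul_index' (fun i => h0r m i (F m)), Finsupp.smul_sum]
  exact Finsupp.sum_congr fun n _ => hsr z m n _ _

end St10Aux

/-- Let `(V, [·,·], ∘)` be a Gel'fand-Dorfman bialgebra. Then
`A = V ⊗ ℂ[t, t⁻¹]` (encoded as finitely supported functions `ℤ →₀ V`, with
`a ⊗ tᵐ = single m a`) is a Gel'fand-Dorfman bialgebra with Novikov operation
`(a ⊗ tᵐ) ∗ (b ⊗ tⁿ) = (a ∘ b) ⊗ t^{m+n}` and Lie bracket
`[a ⊗ tᵐ, b ⊗ tⁿ] = (m (a ∘ b) − n (b ∘ a)) ⊗ t^{m+n−1} + [b, a] ⊗ t^{m+n}`. -/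
theorem statement_10 (V : Type) [AddCommGroup V] [Module ℂ V]
    (lie nov : V → V → V) (hGD : IsGD V lie nov) :
    IsGD (ℤ →₀ V)
      (fun F G => F.sum fun mm a => G.sum fun nn b =>
        mm • Finsupp.single (mm + nn - 1) (nov a b) -
        nn • Finsupp.single (mm + nn - 1) (nov b a) +
        Finsupp.single (mm + nn) (lie b a))
      (fun F G => F.sum fun mm a => G.sum fun nn b =>
        Finsupp.single (mm + nn) (nov a b)) := by
  classical
  obtain ⟨⟨⟨laddl, laddr, lsmull, lsmulr⟩, lskew, ljac⟩,
    ⟨⟨naddl, naddr, nsmull, nsmulr⟩, nA1, nA2⟩, hc⟩ := hGD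
  have n0l : ∀ b : V, nov 0 b = 0 := fun b => by
    have h := naddl 0 0 b; rw [add_zero] at h; exact left_eq_add.mp h
  have n0r : ∀ a : V, nov a 0 = 0 := fun a => by
    have h := naddr a 0 0; rw [add_zero] at h; exact left_eq_add.mp h
  have l0l : ∀ b : V, lie 0 b = 0 := fun b => by
    have h := laddl 0 0 b; rw [add_zero] at h; exact left_eq_add.mp h
  have l0r : ∀ a : V, lie a 0 = 0 := fun a => by
    have h := laddr a 0 0; rw [add_zero] at h; exact left_eq_add.mp h
  have nnegl : ∀ x y : V, nov (-x) y = -nov x y := fun x y =>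
    map_neg (AddMonoidHom.mk' (fun t => nov t y) (fun s t => naddl s t y)) x
  have nnegr : ∀ x y : V, nov x (-y) = -nov x y := fun x y =>
    map_neg (AddMonoidHom.mk' (fun t => nov x t) (fun s t => naddr x s t)) y
  have lnegl : ∀ x y : V, lie (-x) y = -lie x y := fun x y =>
    map_neg (AddMonoidHom.mk' (fun t => lie t y) (fun s t => laddl s t y)) x
  have lnegr : ∀ x y : V, lie x (-y) = -lie x y := fun x y =>
    map_neg (AddMonoidHom.mk' (fun t => lie x t) (fun s t => laddr x s t)) y
  -- hypotheses for Φq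
  have hql : ∀ (m n : ℤ) (a a' b : V),
      st10Phiq lie nov m n (a + a') b =
        st10Phiq lie nov m n a b + st10Phiq lie nov m n a' b := by
    intro m n a a' b
    simp only [st10Phiq, naddl, naddr, laddr, smul_add, Finsupp.single_add]
    abel
  have hqr : ∀ (m n : ℤ) (a b b' : V),
      st10Phiq lie nov m n a (b + b') =
        st10Phiq lie nov m n a b + st10Phiq lie nov m n a b' := by
    intro m n a b b'
    simp only [st10Phiq, naddl, naddr, laddl, smul_add, Finsupp.single_add]
    abel
  have hq0l : ∀ (m n : ℤ) (b : V), st10Phiq lie nov m n 0 b = 0 := by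
    intro m n b; simp [st10Phiq, n0l, n0r, l0r]
  have hq0r : ∀ (m n : ℤ) (a : V), st10Phiq lie nov m n a 0 = 0 := by
    intro m n a; simp [st10Phiq, n0l, n0r, l0l]
  have hqsl : ∀ (z : ℂ) (m n : ℤ) (a b : V),
      st10Phiq lie nov m n (z • a) b = z • st10Phiq lie nov m n a b := by
    intro z m n a b
    simp only [st10Phiq, nsmull, nsmulr, lsmulr, ← Finsupp.smul_single,
      smul_sub, smul_add, smul_comm z]
  have hqsr : ∀ (z : ℂ) (m n : ℤ) (a b : V),
      st10Phiq lie nov m n a (z • b) = z • st10Phiq lie nov m n a b := by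
    intro z m n a b
    simp only [st10Phiq, nsmull, nsmulr, lsmull, ← Finsupp.smul_single,
      smul_sub, smul_add, smul_comm z]
  -- hypotheses for Φp
  have hpl : ∀ (m n : ℤ) (a a' b : V),
      st10Phip nov m n (a + a') b = st10Phip nov m n a b + st10Phip nov m n a' b := by
    intro m n a a' b; simp [st10Phip, naddl, Finsupp.single_add]
  have hpr : ∀ (m n : ℤ) (a b b' : V),
      st10Phip nov m n a (b + b') = st10Phip nov m n a b + st10Phip nov m n a b' := by
    intro m n a b b'; simp [st10Phip, naddr, Finsupp.single_add]
  have hp0l : ∀ (m n : ℤ) (b : V), st10Phip nov m n 0 b = 0 := by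
    intro m n b; simp [st10Phip, n0l]
  have hp0r : ∀ (m n : ℤ) (a : V), st10Phip nov m n a 0 = 0 := by
    intro m n a; simp [st10Phip, n0r]
  have hpsl : ∀ (z : ℂ) (m n : ℤ) (a b : V),
      st10Phip nov m n (z • a) b = z • st10Phip nov m n a b := by
    intro z m n a b; simp [st10Phip, nsmull, Finsupp.smul_single]
  have hpsr : ∀ (z : ℂ) (m n : ℤ) (a b : V),
      st10Phip nov m n a (z • b) = z • st10Phip nov m n a b := by
    intro z m n a b; simp [st10Phip, nsmulr, Finsupp.smul_single]
  -- abbreviations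
  have Bss := st10_single_single (Φ := st10Phiq lie nov) hq0l hq0r
  have Nss := st10_single_single (Φ := st10Phip nov) hp0l hp0r
  have Bal := st10_add_left (Φ := st10Phiq lie nov) hql hq0l
  have Bar := st10_add_right (Φ := st10Phiq lie nov) hqr hq0r
  have Bsl := st10_sub_left (Φ := st10Phiq lie nov) hql hq0l
  have Bsr := st10_sub_right (Φ := st10Phiq lie nov) hqr hq0r
  have Bzl := st10_zsmul_left (Φ := st10Phiq lie nov) hql hq0l
  have Bzr := st10_zsmul_right (Φ := st10Phiq lie nov) hqr hq0r
  have Nal := st10_add_left (Φ := st10Phip nov) hpl hp0l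
  have Nar := st10_add_right (Φ := st10Phip nov) hpr hp0r
  have Nsl := st10_sub_left (Φ := st10Phip nov) hpl hp0l
  have Nsr := st10_sub_right (Φ := st10Phip nov) hpr hp0r
  have Nzl := st10_zsmul_left (Φ := st10Phip nov) hpl hp0l
  have Nzr := st10_zsmul_right (Φ := st10Phip nov) hpr hp0r
  show IsGD (ℤ →₀ V) (st10br2 (st10Phiq lie nov)) (st10br2 (st10Phip nov))
  refine ⟨⟨⟨fun F F' G => Bal F F' G, fun F G G' => Bar F G G',
      fun z F G => st10_smul_left (h0l := hq0l) (hsl := hqsl) z F G,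
      fun z F G => st10_smul_right (h0r := hq0r) (hsr := hqsr) z F G⟩, ?_, ?_⟩,
    ⟨⟨fun F F' G => Nal F F' G, fun F G G' => Nar F G G',
      fun z F G => st10_smul_left (h0l := hp0l) (hsl := hpsl) z F G,
      fun z F G => st10_smul_right (h0r := hp0r) (hsr := hpsr) z F G⟩, ?_, ?_⟩, ?_⟩
  · -- skew symmetry of the bracket
    intro F G
    induction F using Finsupp.induction_linear with
    | zero => simp [st10_zero_left, st10_zero_right]
    | add f g hf hg =>
      simp only [Bal, Bar, Nal, Nar]
      linear_combination (norm := abel) hf + hg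

    | single m a =>
      induction G using Finsupp.induction_linear with
      | zero => simp [st10_zero_left, st10_zero_right]
      | add f g hf hg =>
      simp only [Bal, Bar, Nal, Nar]
      linear_combination (norm := abel) hf + hg

      | single n b =>
        rw [Bss, Bss]
        simp only [st10Phiq]
        rw [add_comm n m, lskew a b, Finsupp.single_neg]
        module
  · -- Jacobi identity
    intro F G H
    induction F using Finsupp.induction_linear with
    | zero => simp [st10_zero_left, st10_zero_right]
    | add f g hf hg =>
      simp only [Bal, Bar, Nal, Nar]
      linear_combination (norm := abel) hf + hg

    | single m a =>
      induction G using Finsupp.induction_linear with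
      | zero => simp [st10_zero_left, st10_zero_right]
      | add f g hf hg =>
      simp only [Bal, Bar, Nal, Nar]
      linear_combination (norm := abel) hf + hg

      | single n b =>
        induction H using Finsupp.induction_linear with
        | zero => simp [st10_zero_left, st10_zero_right]
        | add f g hf hg =>
      simp only [Bal, Bar, Nal, Nar]
      linear_combination (norm := abel) hf + hg

        | single p c =>
          simp only [Bss, st10Phiq, Bal, Bar, Bsl, Bsr, Bzl, Bzr]
          rw [show m + (n + p - 1) - 1 = m + n + p - 2 from by ring,
            show m + n - 1 + p - 1 = m + n + p - 2 from by ring,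
            show n + (m + p - 1) - 1 = m + n + p - 2 from by ring,
            show m + (n + p - 1) = m + n + p - 1 from by ring,
            show m + (n + p) - 1 = m + n + p - 1 from by ring,
            show m + n - 1 + p = m + n + p - 1 from by ring,
            show n + (m + p - 1) = m + n + p - 1 from by ring,
            show n + (m + p) - 1 = m + n + p - 1 from by ring,
            show m + (n + p) = m + n + p from by ring,
            show n + (m + p) = m + n + p from by ring]
          have C1 := hc a b c
          have C2 := hc b c a
          have C3 := hc c b a
          have J := ljac a b c
          simp only [lskew c b, lskew b a, lskew c a, lskew a (lie b c), lskew b (lie a c),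
            nnegl, nnegr, lnegl, lnegr, neg_neg, smul_neg] at C2 C3 J
          ext j
          simp only [Finsupp.coe_add, Finsupp.coe_sub, Finsupp.coe_smul, Pi.add_apply,
            Pi.sub_apply, Pi.smul_apply, Finsupp.single_apply]
          split_ifs <;>
            first
            | (exfalso; omega)
            | (simp only [smul_zero, add_zero, sub_zero, zero_sub, zero_add, neg_zero,
                 smul_neg, lskew c b, lskew b a, lskew c a, lskew c (nov a b),
                 lskew c (nov b a), lskew c (lie a b), nnegl, nnegr, lnegl, lnegr, neg_neg]
               first
               | done
               | rfl
               | (linear_combination (norm := module) (m - m ^ 2 : ℤ) • nA1 a b c +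
                   (n ^ 2 - n : ℤ) • nA1 b a c + (p - p ^ 2 : ℤ) • nA1 c a b -
                   (m * n : ℤ) • nA2 a b c + (m * p : ℤ) • nA2 a c b + (n * p : ℤ) • nA2 c b a)
               | (linear_combination (norm := module) (m : ℤ) • C1 + (n : ℤ) • C2 - (p : ℤ) • C3)
               | (linear_combination (norm := module) J))
  · -- Novikov right symmetry
    intro F G H
    induction F using Finsupp.induction_linear with
    | zero => simp [st10_zero_left, st10_zero_right]
    | add f g hf hg =>
      simp only [Bal, Bar, Nal, Nar]
      linear_combination (norm := abel) hf + hg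

    | single m a =>
      induction G using Finsupp.induction_linear with
      | zero => simp [st10_zero_left, st10_zero_right]
      | add f g hf hg =>
      simp only [Bal, Bar, Nal, Nar]
      linear_combination (norm := abel) hf + hg

      | single n b =>
        induction H using Finsupp.induction_linear with
        | zero => simp [st10_zero_left, st10_zero_right]
        | add f g hf hg =>
      simp only [Bal, Bar, Nal, Nar]
      linear_combination (norm := abel) hf + hg

        | single p c =>
          simp only [Nss, st10Phip]
          rw [nA1 a b c, show m + n + p = m + p + n from by ring]
  · -- Novikov left symmetry
    intro F G H
    induction F using Finsupp.induction_linear with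
    | zero => simp [st10_zero_left, st10_zero_right]
    | add f g hf hg =>
      simp only [Bal, Bar, Nal, Nar]
      linear_combination (norm := abel) hf + hg

    | single m a =>
      induction G using Finsupp.induction_linear with
      | zero => simp [st10_zero_left, st10_zero_right]
      | add f g hf hg =>
      simp only [Bal, Bar, Nal, Nar]
      linear_combination (norm := abel) hf + hg

      | single n b =>
        induction H using Finsupp.induction_linear with
        | zero => simp [st10_zero_left, st10_zero_right]
        | add f g hf hg =>
      simp only [Bal, Bar, Nal, Nar]
      linear_combination (norm := abel) hf + hg

        | single p c =>
          simp only [Nss, st10Phip]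
          rw [show m + n + p = m + (n + p) from by ring, ← Finsupp.single_sub, nA2 a b c,
            show (n + m + p : ℤ) = m + (n + p) from by ring,
            show (n + (m + p) : ℤ) = m + (n + p) from by ring, ← Finsupp.single_sub]
  · -- compatibility
    intro F G H
    induction F using Finsupp.induction_linear with
    | zero => simp [st10_zero_left, st10_zero_right]
    | add f g hf hg =>
      simp only [Bal, Bar, Nal, Nar]
      linear_combination (norm := abel) hf + hg

    | single m a =>
      induction G using Finsupp.induction_linear with
      | zero => simp [st10_zero_left, st10_zero_right]
      | add f g hf hg =>
      simp only [Bal, Bar, Nal, Nar]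
      linear_combination (norm := abel) hf + hg

      | single n b =>
        induction H using Finsupp.induction_linear with
        | zero => simp [st10_zero_left, st10_zero_right]
        | add f g hf hg =>
      simp only [Bal, Bar, Nal, Nar]
      linear_combination (norm := abel) hf + hg

        | single p c =>
          simp only [Bss, Nss, st10Phiq, st10Phip, Bal, Bar, Bsl, Bsr, Bzl, Bzr,
            Nal, Nar, Nsl, Nsr, Nzl, Nzr]
          rw [show m + n - 1 + p = m + n + p - 1 from by ring,
            show m + (n + p - 1) = m + n + p - 1 from by ring,
            show m + p + n - 1 = m + n + p - 1 from by ring,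
            show m + p - 1 + n = m + n + p - 1 from by ring,
            show m + (n + p) = m + n + p from by ring,
            show m + p + n = m + n + p from by ring]
          have C1 := hc a b c
          ext j
          simp only [Finsupp.coe_add, Finsupp.coe_sub, Finsupp.coe_smul, Finsupp.coe_zero,
            Pi.add_apply, Pi.sub_apply, Pi.smul_apply, Pi.zero_apply, Finsupp.single_apply]
          split_ifs <;>
            first
            | (exfalso; omega)
            | (simp only [smul_zero, add_zero, sub_zero, zero_sub, zero_add, neg_zero,
                 smul_neg, lskew c b, lskew b a, lskew c a, lskew c (nov a b),
                 lskew b (nov a c), nnegl, nnegr, lnegl, lnegr, neg_neg]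
               first
               | done
               | rfl
               | (linear_combination (norm := module) (2 * m : ℤ) • nA1 a b c +
                   (n : ℤ) • nA2 a b c - (p : ℤ) • nA2 a c b)
               | (linear_combination (norm := module) -C1))

end CA
end

section
/- Let (A, ·, [·,·]) be a Lie-Poisson algebra and let d : A → A be a derivation of the commutative associative algebra (A, ·) such that d[u,v] = [d(u), v] + [u, d(v)] + ξ[u,v] for all u, v ∈ A, where ξ ∈ ℂ is a constant. Define u ∘ v = u · d(v) + ξ u · v. Then (A, ·, ∘) is a Novikov-Poisson algebra and (A, [·,·], ∘) is a Gel'fand-Dorfman bialgebra; that is, (A, [·,·], ∘, ·) is a Gel'fand-Dorfman Novikov-Poisson algebra. -/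
open Finsupp MvPolynomial
open scoped TensorProduct

namespace CA

/-- Let `(A, ·, [·,·])` be a Lie-Poisson algebra and `d` a derivation of
`(A, ·)` with `d[u,v] = [d u, v] + [u, d v] + ξ [u,v]` for a constant `ξ ∈ ℂ`.
With `u ∘ v = u · d v + ξ (u · v)`, the quadruple `(A, [·,·], ∘, ·)` is a
Gel'fand-Dorfman Novikov-Poisson algebra: `(A, ∘, ·)` is a Novikov-Poisson algebra and
`(A, [·,·], ∘)` is a Gel'fand-Dorfman bialgebra (and `(A, [·,·], ·)` is Lie-Poisson by
hypothesis). -/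
theorem statement_11 (A : Type) [AddCommGroup A] [Module ℂ A]
    (lie dot : A → A → A) (h : IsLiePoisson A lie dot)
    (d : A →ₗ[ℂ] A) (hd : ∀ u v : A, d (dot u v) = dot (d u) v + dot u (d v))
    (ξ : ℂ) (hξ : ∀ u v : A, d (lie u v) = lie (d u) v + lie u (d v) + ξ • lie u v) :
    IsNovPoisson A (fun u v => dot u (d v) + ξ • dot u v) dot ∧
    IsGD A lie (fun u v => dot u (d v) + ξ • dot u v) := by
  obtain ⟨hlie, hca, leib⟩ := h
  obtain ⟨⟨la1, la2, ls1, ls2⟩, lskew, ljac⟩ := hlie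
  obtain ⟨⟨da1, da2, ds1, ds2⟩, dcomm, dassoc⟩ := hca
  have dneg1 : ∀ a b : A, dot (-a) b = -dot a b := fun a b => by
    rw [← neg_one_smul ℂ a, ds1, neg_one_smul]
  have dneg2 : ∀ a b : A, dot a (-b) = -dot a b := fun a b => by
    rw [← neg_one_smul ℂ b, ds2, neg_one_smul]
  have dswap : ∀ a b x : A, dot a (dot b x) = dot b (dot a x) := fun a b x => by
    rw [← dassoc, dcomm a b, dassoc]
  have leibL : ∀ a b c : A, lie (dot a b) c = dot (lie a c) b + dot a (lie b c) := by
    intro a b c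
    rw [lskew, leib, lskew c a, lskew c b, dneg1, dneg2, neg_add, neg_neg, neg_neg]
  set m : A → A → A := fun u v => dot u (d v) + ξ • dot u v with hm
  have mbil : BilinV A m := by
    refine ⟨fun a b c => ?_, fun a b c => ?_, fun z a b => ?_, fun z a b => ?_⟩
    · simp only [hm, da1, smul_add]; abel
    · simp only [hm, map_add, da2, smul_add]; abel
    · simp only [hm, ds1, smul_add]; module
    · simp only [hm, map_smul, ds2]; module
  have mnov : IsNovAlg A m := by
    refine ⟨mbil, fun a b c => ?_, fun a b c => ?_⟩
    · simp only [hm, da1, ds1, smul_add, dassoc]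
      rw [dcomm (d b) (d c), dcomm b (d c), dcomm (d b) c, dcomm b c]
      module
    · simp only [hm, map_add, map_smul, hd, da1, da2, ds1, ds2, smul_add, dassoc]
      rw [dswap a b (d (d c)), dswap a b (d c), dswap a b c, dswap a (d b) (d c),
        dswap a (d b) c]
      module
  refine ⟨⟨mnov, ⟨⟨da1, da2, ds1, ds2⟩, dcomm, dassoc⟩, fun a b c => ?_, fun a b c => ?_⟩,
    ⟨⟨la1, la2, ls1, ls2⟩, lskew, ljac⟩, mnov, fun a b c => ?_⟩
  · simp only [hm, hd, da1, da2, ds1, ds2, smul_add, dassoc]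
    rw [dswap a b (d c), dswap a b c, dswap a (d b) c]
    module
  · simp only [hm, da2, ds2, smul_add, dassoc]
  · simp only [hm, hξ, la1, la2, ls1, ls2, da1, da2, ds1, ds2, smul_add, map_add,
      map_smul, leibL]
    rw [lskew (d c) b, lskew c b, lskew (d b) c, lskew b c]
    simp only [dneg2, neg_neg]
    module
end CA
end
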